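/- arXiv:1012.4255 — 3 statements merged into one kernel-verified Lean document; each statement's English description precedes it below -/
import Mathlib

section
/- Let (X,Y) be a pair of square-integrable real random variables and let (X₁,Y₁), (X₂,Y₂) be independent copies of (X,Y). Set ΔX = X₁−X₂ and ΔY = Y₁−Y₂. Suppose that P(ΔX = 0) = 0 and that the conditional distribution of ΔY given ΔX is almost surely symmetric about 0 and almost surely assigns zero mass to {0}. Then Cov(X,Y) = 0 and P(ΔX > 0, ΔY > 0) = 1/4; in particular E(ω) = P(X₁<X₂, Y₁<Y₂) − 1/4 = 0. -/
open MeasureTheory ProbabilityTheory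

/-- A measure on `ℝ` is symmetric about `0` if it equals its pushforward under `x ↦ -x`. -/
def IsSymmetricAboutZero (μ : Measure ℝ) : Prop :=
  μ.map (fun x => -x) = μ

lemma aux_half_mul_half : (1/2 : ENNReal) * (1/2) = 1/4 := by
  simp only [one_div]
  rw [show (4:ENNReal) = 2*2 by norm_num, ENNReal.mul_inv (by simp) (by simp)]

lemma aux_half {ν : Measure ℝ} [IsProbabilityMeasure ν]
    (hs : ν.map (fun x => -x) = ν) (h0 : ν {0} = 0) :
    ν (Set.Ioi 0) = 1/2 ∧ ν (Set.Iio 0) = 1/2 := by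
  have hIoi : ν (Set.Iio 0) = ν (Set.Ioi 0) := by
    conv_lhs => rw [← hs]
    rw [Measure.map_apply measurable_neg measurableSet_Iio]
    congr 1
    ext x
    simp
  have hcompl : ν ({0}ᶜ : Set ℝ) = 1 := by
    rw [measure_compl (measurableSet_singleton 0) (measure_ne_top _ _), h0, measure_univ,
      tsub_zero]
  have hunion : ν (Set.Iio 0) + ν (Set.Ioi 0) = 1 := by
    rw [← measure_union (by simp only [Set.disjoint_left, Set.mem_Iio, Set.mem_Ioi]; intro a h h'; linarith) measurableSet_Ioi, Set.Iio_union_Ioi,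
      hcompl]
  rw [hIoi] at hunion
  have h2 : (2 : ENNReal) * ν (Set.Ioi 0) = 2 * (1/2) := by
    rw [two_mul, hunion, one_div, ENNReal.mul_inv_cancel (by norm_num) (by norm_num)]
  have h3 := (ENNReal.mul_right_inj (by norm_num) (by norm_num)).mp h2
  exact ⟨h3, hIoi ▸ h3⟩

lemma aux_mul_int {Ω : Type*} [MeasurableSpace Ω] {P : Measure Ω} {f g : Ω → ℝ}
    (hf : MemLp f 2 P) (hg : MemLp g 2 P) :
    Integrable (fun ω => f ω * g ω) P := by
  refine Integrable.mono' (((hf.integrable_sq.add hg.integrable_sq)).const_mul (1/2))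
    (hf.1.mul hg.1) (Filter.Eventually.of_forall fun ω => ?_)
  simp only [Pi.add_apply, Real.norm_eq_abs, abs_mul]
  nlinarith [abs_nonneg (f ω), abs_nonneg (g ω), sq_abs (f ω), sq_abs (g ω),
    sq_nonneg (|f ω| - |g ω|)]

/-- **If the conditional distribution of `ΔY = Y₁ - Y₂` given `ΔX = X₁ - X₂` is a.s. symmetric
about `0` (and atomless at `0`, with `ΔX ≠ 0` a.s.), then `Cov(X,Y) = 0`,
`P(ΔX > 0, ΔY > 0) = 1/4`, and `E(ω) = P(X₁<X₂, Y₁<Y₂) - 1/4 = 0`.** -/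
theorem cov_eq_zero_and_rank_corr_eq_zero_of_condDistrib_symm
    {Ω : Type*} [MeasurableSpace Ω] (P : Measure Ω) [IsProbabilityMeasure P]
    (X Y X₁ Y₁ X₂ Y₂ : Ω → ℝ)
    (hX : Measurable X) (hY : Measurable Y)
    (hX₁ : Measurable X₁) (hY₁ : Measurable Y₁) (hX₂ : Measurable X₂) (hY₂ : Measurable Y₂)
    (hXL2 : MemLp X 2 P) (hYL2 : MemLp Y 2 P)
    (hindep : IndepFun (fun ω => (X₁ ω, Y₁ ω)) (fun ω => (X₂ ω, Y₂ ω)) P)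
    (hcopy₁ : P.map (fun ω => (X₁ ω, Y₁ ω)) = P.map (fun ω => (X ω, Y ω)))
    (hcopy₂ : P.map (fun ω => (X₂ ω, Y₂ ω)) = P.map (fun ω => (X ω, Y ω)))
    (hΔXne : P {ω | X₁ ω - X₂ ω = 0} = 0)
    (hcond : ∀ᵐ x ∂(P.map (fun ω => X₁ ω - X₂ ω)),
      IsSymmetricAboutZero
          (condDistrib (fun ω => Y₁ ω - Y₂ ω) (fun ω => X₁ ω - X₂ ω) P x) ∧
        condDistrib (fun ω => Y₁ ω - Y₂ ω) (fun ω => X₁ ω - X₂ ω) P x {0} = 0) :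
    (∫ ω, (X ω - ∫ ω', X ω' ∂P) * (Y ω - ∫ ω', Y ω' ∂P) ∂P = 0) ∧
      P {ω | 0 < X₁ ω - X₂ ω ∧ 0 < Y₁ ω - Y₂ ω} = 1 / 4 ∧
      (P {ω | X₁ ω < X₂ ω ∧ Y₁ ω < Y₂ ω}).toReal - 1 / 4 = 0 := by
  -- abbreviations
  set ΔX : Ω → ℝ := fun ω => X₁ ω - X₂ ω with hΔXdef
  set ΔY : Ω → ℝ := fun ω => Y₁ ω - Y₂ ω with hΔYdef
  have hmΔX : Measurable ΔX := hX₁.sub hX₂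
  have hmΔY : Measurable ΔY := hY₁.sub hY₂
  set μ : Measure ℝ := P.map ΔX with hμdef
  set κ := condDistrib ΔY ΔX P with hκdef
  have hmPair : Measurable fun ω => (ΔX ω, ΔY ω) := hmΔX.prodMk hmΔY
  -- disintegration
  have hL : P.map (fun ω => (ΔX ω, ΔY ω)) = μ ⊗ₘ κ := by
    rw [hκdef, condDistrib]
    have h := (P.map (fun ω => (ΔX ω, ΔY ω))).disintegrate (P.map (fun ω => (ΔX ω, ΔY ω))).condKernel
    rw [Measure.fst_map_prodMk hmΔY] at h
    exact h.symm
  -- marginal μ is symmetric and atomless at 0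
  set m : Measure (ℝ × ℝ) := P.map (fun ω => (X ω, Y ω)) with hmdef
  have hpp : P.map (fun ω => ((X₁ ω, Y₁ ω), (X₂ ω, Y₂ ω))) = m.prod m := by
    rw [(indepFun_iff_map_prod_eq_prod_map_map ((hX₁.prodMk hY₁).aemeasurable)
      ((hX₂.prodMk hY₂).aemeasurable)).mp hindep, hcopy₁, hcopy₂]
  have hmg : Measurable fun p : (ℝ × ℝ) × (ℝ × ℝ) => p.1.1 - p.2.1 :=
    (measurable_fst.fst).sub (measurable_snd.fst)
  have hμeq : μ = (m.prod m).map fun p : (ℝ × ℝ) × (ℝ × ℝ) => p.1.1 - p.2.1 := by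
    rw [← hpp, Measure.map_map hmg ((hX₁.prodMk hY₁).prodMk (hX₂.prodMk hY₂))]
    rfl
  have hμsymm : μ.map (fun x => -x) = μ := by
    rw [hμeq, Measure.map_map measurable_neg hmg]
    have hcomp : ((fun x : ℝ => -x) ∘ fun p : (ℝ × ℝ) × (ℝ × ℝ) => p.1.1 - p.2.1)
        = (fun p : (ℝ × ℝ) × (ℝ × ℝ) => p.1.1 - p.2.1) ∘ Prod.swap := by
      funext p; simp [Function.comp]
    rw [hcomp, ← Measure.map_map hmg measurable_swap, Measure.prod_swap]
  have hμ0 : μ {0} = 0 := by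
    rw [hμdef, Measure.map_apply hmΔX (measurableSet_singleton 0)]
    exact hΔXne
  haveI : IsProbabilityMeasure μ := Measure.isProbabilityMeasure_map hmΔX.aemeasurable
  obtain ⟨hμIoi, hμIio⟩ := aux_half hμsymm hμ0
  -- conditional halves
  have hκIoi : ∀ᵐ x ∂μ, κ x (Set.Ioi 0) = 1/2 := by
    filter_upwards [hcond] with x hx
    exact (aux_half hx.1 hx.2).1
  have hκIio : ∀ᵐ x ∂μ, κ x (Set.Iio 0) = 1/2 := by
    filter_upwards [hcond] with x hx
    exact (aux_half hx.1 hx.2).2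
  -- product set formula
  have hprodset : ∀ (A B : Set ℝ), MeasurableSet A → MeasurableSet B →
      (∀ᵐ x ∂μ, κ x B = 1/2) → (μ ⊗ₘ κ) (A ×ˢ B) = 1/2 * μ A := by
    intro A B hA hB hAE
    rw [Measure.compProd_apply (hA.prod hB)]
    have hfun : ∀ x, κ x (Prod.mk x ⁻¹' (A ×ˢ B)) = A.indicator (fun x => κ x B) x := by
      intro x
      by_cases hx : x ∈ A <;> simp [Set.mk_preimage_prod_right_eq_if, hx]
    rw [lintegral_congr hfun, lintegral_indicator hA _,
      lintegral_congr_ae (ae_restrict_of_ae hAE), setLIntegral_const]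
  -- Part 2
  have h2 : P {ω | 0 < X₁ ω - X₂ ω ∧ 0 < Y₁ ω - Y₂ ω} = 1 / 4 := by
    have hset : {ω | 0 < X₁ ω - X₂ ω ∧ 0 < Y₁ ω - Y₂ ω}
        = (fun ω => (ΔX ω, ΔY ω)) ⁻¹' (Set.Ioi 0 ×ˢ Set.Ioi 0) := rfl
    rw [hset, ← Measure.map_apply hmPair (measurableSet_Ioi.prod measurableSet_Ioi), hL,
      hprodset _ _ measurableSet_Ioi measurableSet_Ioi hκIoi, hμIoi, aux_half_mul_half]
  -- Part 3
  have h3 : P {ω | X₁ ω < X₂ ω ∧ Y₁ ω < Y₂ ω} = 1 / 4 := by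
    have hset : {ω | X₁ ω < X₂ ω ∧ Y₁ ω < Y₂ ω}
        = (fun ω => (ΔX ω, ΔY ω)) ⁻¹' (Set.Iio 0 ×ˢ Set.Iio 0) := by
      ext ω
      simp [hΔXdef, hΔYdef, sub_neg]
    rw [hset, ← Measure.map_apply hmPair (measurableSet_Iio.prod measurableSet_Iio), hL,
      hprodset _ _ measurableSet_Iio measurableSet_Iio hκIio, hμIio, aux_half_mul_half]
  -- Part 1 : symmetry of joint law
  have hmT : Measurable fun p : ℝ × ℝ => (p.1, -p.2) :=
    measurable_fst.prodMk measurable_snd.neg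
  have hLsymm : (P.map (fun ω => (ΔX ω, ΔY ω))).map (fun p : ℝ × ℝ => (p.1, -p.2))
      = P.map (fun ω => (ΔX ω, ΔY ω)) := by
    rw [hL]
    ext s hs
    rw [Measure.map_apply hmT hs, Measure.compProd_apply (hmT hs), Measure.compProd_apply hs]
    refine lintegral_congr_ae ?_
    filter_upwards [hcond] with x hx
    have hpre : (Prod.mk x ⁻¹' ((fun p : ℝ × ℝ => (p.1, -p.2)) ⁻¹' s))
        = (fun y : ℝ => -y) ⁻¹' (Prod.mk x ⁻¹' s) := rfl
    rw [hpre, ← Measure.map_apply measurable_neg (hs.preimage measurable_prodMk_left)]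
    rw [hx.1]
  -- E[ΔX ΔY] = 0
  have hmf : Measurable fun p : ℝ × ℝ => p.1 * p.2 := measurable_fst.mul measurable_snd
  have hEΔ : ∫ ω, ΔX ω * ΔY ω ∂P = 0 := by
    have h1 : ∫ p : ℝ × ℝ, p.1 * p.2 ∂(P.map (fun ω => (ΔX ω, ΔY ω)))
        = ∫ ω, ΔX ω * ΔY ω ∂P :=
      integral_map hmPair.aemeasurable hmf.aestronglyMeasurable
    have h2' : ∫ p : ℝ × ℝ, p.1 * p.2 ∂(P.map (fun ω => (ΔX ω, ΔY ω)))
        = - ∫ p : ℝ × ℝ, p.1 * p.2 ∂(P.map (fun ω => (ΔX ω, ΔY ω))) := by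
      conv_lhs => rw [← hLsymm]
      rw [integral_map hmT.aemeasurable hmf.aestronglyMeasurable, ← integral_neg]
      exact integral_congr_ae (Filter.Eventually.of_forall fun p => by simp)
    rw [← h1]
    linarith [h2']
  -- transfer of moments from copies
  have hmapX₁ : P.map X₁ = P.map X := by
    calc P.map X₁ = (P.map (fun ω => (X₁ ω, Y₁ ω))).map Prod.fst :=
          (Measure.map_map measurable_fst (hX₁.prodMk hY₁)).symm
    _ = (P.map (fun ω => (X ω, Y ω))).map Prod.fst := by rw [hcopy₁]
    _ = P.map X := Measure.map_map measurable_fst (hX.prodMk hY)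
  have hmapY₁ : P.map Y₁ = P.map Y := by
    calc P.map Y₁ = (P.map (fun ω => (X₁ ω, Y₁ ω))).map Prod.snd :=
          (Measure.map_map measurable_snd (hX₁.prodMk hY₁)).symm
    _ = (P.map (fun ω => (X ω, Y ω))).map Prod.snd := by rw [hcopy₁]
    _ = P.map Y := Measure.map_map measurable_snd (hX.prodMk hY)
  have hmapX₂ : P.map X₂ = P.map X := by
    calc P.map X₂ = (P.map (fun ω => (X₂ ω, Y₂ ω))).map Prod.fst :=
          (Measure.map_map measurable_fst (hX₂.prodMk hY₂)).symm
    _ = (P.map (fun ω => (X ω, Y ω))).map Prod.fst := by rw [hcopy₂]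
    _ = P.map X := Measure.map_map measurable_fst (hX.prodMk hY)
  have hmapY₂ : P.map Y₂ = P.map Y := by
    calc P.map Y₂ = (P.map (fun ω => (X₂ ω, Y₂ ω))).map Prod.snd :=
          (Measure.map_map measurable_snd (hX₂.prodMk hY₂)).symm
    _ = (P.map (fun ω => (X ω, Y ω))).map Prod.snd := by rw [hcopy₂]
    _ = P.map Y := Measure.map_map measurable_snd (hX.prodMk hY)
  -- MemLp for copies
  have hmemtrans : ∀ {f g : Ω → ℝ}, Measurable f → Measurable g → P.map f = P.map g →
      MemLp g 2 P → MemLp f 2 P := by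
    intro f g hf hg hfg hgl
    have h1 : MemLp (fun x : ℝ => x) 2 (P.map g) :=
      (memLp_map_measure_iff aestronglyMeasurable_id hg.aemeasurable).mpr hgl
    rw [← hfg] at h1
    exact (memLp_map_measure_iff aestronglyMeasurable_id hf.aemeasurable).mp h1
  have hX₁L2 : MemLp X₁ 2 P := hmemtrans hX₁ hX hmapX₁ hXL2
  have hY₁L2 : MemLp Y₁ 2 P := hmemtrans hY₁ hY hmapY₁ hYL2
  have hX₂L2 : MemLp X₂ 2 P := hmemtrans hX₂ hX hmapX₂ hXL2
  have hY₂L2 : MemLp Y₂ 2 P := hmemtrans hY₂ hY hmapY₂ hYL2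
  -- integral transfers
  have hinttrans : ∀ {f g : Ω → ℝ}, Measurable f → Measurable g → P.map f = P.map g →
      ∫ ω, f ω ∂P = ∫ ω, g ω ∂P := by
    intro f g hf hg hfg
    have e1 : ∫ x, x ∂(P.map f) = ∫ ω, f ω ∂P :=
      integral_map hf.aemeasurable aestronglyMeasurable_id
    have e2 : ∫ x, x ∂(P.map g) = ∫ ω, g ω ∂P :=
      integral_map hg.aemeasurable aestronglyMeasurable_id
    rw [← e1, ← e2, hfg]
  have hEX₁ : ∫ ω, X₁ ω ∂P = ∫ ω, X ω ∂P := hinttrans hX₁ hX hmapX₁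
  have hEY₁ : ∫ ω, Y₁ ω ∂P = ∫ ω, Y ω ∂P := hinttrans hY₁ hY hmapY₁
  have hEX₂ : ∫ ω, X₂ ω ∂P = ∫ ω, X ω ∂P := hinttrans hX₂ hX hmapX₂
  have hEY₂ : ∫ ω, Y₂ ω ∂P = ∫ ω, Y ω ∂P := hinttrans hY₂ hY hmapY₂
  -- E[X₁ Y₁] = E[X Y], E[X₂ Y₂] = E[X Y]
  have hEXY₁ : ∫ ω, X₁ ω * Y₁ ω ∂P = ∫ ω, X ω * Y ω ∂P := by
    rw [← integral_map (hX₁.prodMk hY₁).aemeasurable hmf.aestronglyMeasurable,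
      ← integral_map (hX.prodMk hY).aemeasurable hmf.aestronglyMeasurable, hcopy₁]
  have hEXY₂ : ∫ ω, X₂ ω * Y₂ ω ∂P = ∫ ω, X ω * Y ω ∂P := by
    rw [← integral_map (hX₂.prodMk hY₂).aemeasurable hmf.aestronglyMeasurable,
      ← integral_map (hX.prodMk hY).aemeasurable hmf.aestronglyMeasurable, hcopy₂]
  -- cross terms by independence
  have hind₁ : IndepFun X₁ Y₂ P := hindep.comp measurable_fst measurable_snd
  have hind₂ : IndepFun X₂ Y₁ P := hindep.symm.comp measurable_fst measurable_snd
  have hEX₁Y₂ : ∫ ω, X₁ ω * Y₂ ω ∂P = (∫ ω, X ω ∂P) * ∫ ω, Y ω ∂P := by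
    have := hind₁.integral_mul_eq_mul_integral hX₁.aestronglyMeasurable hY₂.aestronglyMeasurable
    simpa [hEX₁, hEY₂] using this
  have hEX₂Y₁ : ∫ ω, X₂ ω * Y₁ ω ∂P = (∫ ω, X ω ∂P) * ∫ ω, Y ω ∂P := by
    have := hind₂.integral_mul_eq_mul_integral hX₂.aestronglyMeasurable hY₁.aestronglyMeasurable
    simpa [hEX₂, hEY₁] using this
  -- expand E[ΔX ΔY]
  have hi11 := aux_mul_int hX₁L2 hY₁L2
  have hi12 := aux_mul_int hX₁L2 hY₂L2
  have hi21 := aux_mul_int hX₂L2 hY₁L2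
  have hi22 := aux_mul_int hX₂L2 hY₂L2
  have hexpand : ∫ ω, ΔX ω * ΔY ω ∂P
      = ∫ ω, X₁ ω * Y₁ ω ∂P - ∫ ω, X₁ ω * Y₂ ω ∂P - ∫ ω, X₂ ω * Y₁ ω ∂P
        + ∫ ω, X₂ ω * Y₂ ω ∂P := by
    have heq : (fun ω => ΔX ω * ΔY ω)
        = fun ω => X₁ ω * Y₁ ω - X₁ ω * Y₂ ω - X₂ ω * Y₁ ω + X₂ ω * Y₂ ω := by
      funext ω; simp only [hΔXdef, hΔYdef]; ring
    have e1 := integral_add ((hi11.sub hi12).sub hi21) hi22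
    have e2 := integral_sub (hi11.sub hi12) hi21
    have e3 := integral_sub hi11 hi12
    simp only [Pi.add_apply, Pi.sub_apply] at e1 e2 e3
    rw [heq, e1, e2, e3]
  have hkey : ∫ ω, X ω * Y ω ∂P = (∫ ω, X ω ∂P) * ∫ ω, Y ω ∂P := by
    rw [hexpand, hEXY₁, hEXY₂, hEX₁Y₂, hEX₂Y₁] at hEΔ
    linarith
  -- covariance
  have h1 : ∫ ω, (X ω - ∫ ω', X ω' ∂P) * (Y ω - ∫ ω', Y ω' ∂P) ∂P = 0 := by
    set a := ∫ ω', X ω' ∂P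
    set b := ∫ ω', Y ω' ∂P
    have hintXY := aux_mul_int hXL2 hYL2
    have hX1 : Integrable X P := hXL2.integrable one_le_two
    have hY1 : Integrable Y P := hYL2.integrable one_le_two
    have hexp : ∫ ω, (X ω - a) * (Y ω - b) ∂P
        = ∫ ω, (X ω * Y ω - a * Y ω) - (b * X ω - a * b) ∂P :=
      integral_congr_ae (Filter.Eventually.of_forall fun ω => by ring)
    have e1 := integral_sub (hintXY.sub (hY1.const_mul a))
      ((hX1.const_mul b).sub (integrable_const (a * b)))
    have e2 := integral_sub hintXY (hY1.const_mul a)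
    have e3 := integral_sub (hX1.const_mul b) (integrable_const (a * b))
    simp only [Pi.sub_apply] at e1 e2 e3
    rw [hexp, e1, e2, e3, integral_const_mul, integral_const_mul, integral_const, hkey]
    simp only [measure_univ, probReal_univ, ENNReal.toReal_one, one_smul, smul_eq_mul]
    ring
  refine ⟨h1, h2, ?_⟩
  rw [h3]
  rw [ENNReal.toReal_div]
  norm_num
end

section
/- Let (X_i, Y_i), i = 1,…,n, be i.i.d. random elements with X_i = (X_{i1},…,X_{ip}) ∈ ℝ^p and Y_i ∈ ℝ, and for each j = 1,…,p let ω_j = (1/(n(n−1))) Σ_{i≠l} I(X_{ij}<X_{lj}) I(Y_i<Y_l) − 1/4. Then for any κ ∈ (0, 1/2) and any c₃ > 0 there exist a constant c₄ > 0 and an integer N ≥ 2, both depending only on c₃ and κ, such that for all n ≥ N and all p ≥ 1: P( max_{1≤j≤p} |ω_j − E(ω_j)| ≥ c₃ n^{−κ} ) ≤ p·exp(−c₄ n^{1−2κ}). -/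
open MeasureTheory ProbabilityTheory Finset

lemma exists_perm_map_two {α : Type*} [DecidableEq α] {i l i' l' : α} (h : i ≠ l)
    (h' : i' ≠ l') : ∃ τ : Equiv.Perm α, τ i = i' ∧ τ l = l' := by
  refine ⟨(Equiv.swap (Equiv.swap i i' l) l') * Equiv.swap i i', ?_, ?_⟩
  · have h1 : i' ≠ Equiv.swap i i' l := by
      intro hc
      have : Equiv.swap i i' i = Equiv.swap i i' l := by rw [Equiv.swap_apply_left]; exact hc
      exact h ((Equiv.swap i i').injective this)
    simp only [Equiv.Perm.mul_apply, Equiv.swap_apply_left]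
    exact Equiv.swap_apply_of_ne_of_ne h1 h'
  · simp only [Equiv.Perm.mul_apply, Equiv.swap_apply_left]

lemma perm_fib_card {α : Type*} [DecidableEq α] [Fintype α] (a b a' b' : α) (hab : a ≠ b)
    (hab' : a' ≠ b') (q q' : α × α) (hq : q.1 ≠ q.2) (hq' : q'.1 ≠ q'.2) :
    (univ.filter fun σ : Equiv.Perm α => (σ a, σ b) = q).card
      = (univ.filter fun σ : Equiv.Perm α => (σ a', σ b') = q').card := by
  obtain ⟨ρ, hρ1, hρ2⟩ := exists_perm_map_two hab' hab
  obtain ⟨τ, hτ1, hτ2⟩ := exists_perm_map_two hq hq'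
  refine Finset.card_nbij' (fun σ => τ * σ * ρ) (fun σ => τ⁻¹ * σ * ρ⁻¹) ?_ ?_ ?_ ?_
  · intro σ hσ
    simp only [mem_coe, mem_filter, mem_univ, true_and] at hσ ⊢
    have e1 : σ a = q.1 := by rw [← hσ]
    have e2 : σ b = q.2 := by rw [← hσ]
    simp only [Equiv.Perm.mul_apply, hρ1, hρ2, e1, e2, hτ1, hτ2]
  · intro σ hσ
    simp only [mem_coe, mem_filter, mem_univ, true_and] at hσ ⊢
    have e1 : σ a' = q'.1 := by rw [← hσ]
    have e2 : σ b' = q'.2 := by rw [← hσ]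
    have h1 : (τ⁻¹ * σ * ρ⁻¹) a = τ⁻¹ (σ a') := by
      simp only [Equiv.Perm.mul_apply]
      congr 1
      rw [← hρ1, Equiv.Perm.inv_def, Equiv.symm_apply_apply]
    have h2 : (τ⁻¹ * σ * ρ⁻¹) b = τ⁻¹ (σ b') := by
      simp only [Equiv.Perm.mul_apply]
      congr 1
      rw [← hρ2, Equiv.Perm.inv_def, Equiv.symm_apply_apply]
    rw [h1, h2, e1, e2, ← hτ1, ← hτ2, Equiv.Perm.inv_def, Equiv.symm_apply_apply, Equiv.symm_apply_apply]
  · intro σ _; group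
  · intro σ _; group

lemma perm_pair_sum {n : ℕ} (f : Fin n × Fin n → ℝ) (a b : Fin n) (hab : a ≠ b) :
    ∑ σ : Equiv.Perm (Fin n), f (σ a, σ b)
      = ∑ q ∈ univ.filter (fun q : Fin n × Fin n => q.1 ≠ q.2),
          ((univ.filter (fun σ : Equiv.Perm (Fin n) => (σ a, σ b) = q)).card : ℝ) * f q := by
  have hmaps : ∀ σ : Equiv.Perm (Fin n), σ ∈ (univ : Finset (Equiv.Perm (Fin n))) →
      (σ a, σ b) ∈ univ.filter (fun q : Fin n × Fin n => q.1 ≠ q.2) := by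
    intro σ _
    simp only [mem_filter, mem_univ, true_and]
    exact fun hc => hab (σ.injective hc)
  rw [← Finset.sum_fiberwise_of_maps_to hmaps (fun σ => f (σ a, σ b))]
  refine Finset.sum_congr rfl (fun q hq => ?_)
  rw [Finset.sum_congr rfl (fun σ hσ => ?_), Finset.sum_const, nsmul_eq_mul]
  simp only [mem_filter] at hσ
  rw [hσ.2]

lemma perm_card_eq {n : ℕ} (hn : 2 ≤ n) (a b : Fin n) (hab : a ≠ b) (q : Fin n × Fin n)
    (hq : q.1 ≠ q.2) :
    Fintype.card (Equiv.Perm (Fin n))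
      = (univ.filter (fun q : Fin n × Fin n => q.1 ≠ q.2)).card
        * (univ.filter (fun σ : Equiv.Perm (Fin n) => (σ a, σ b) = q)).card := by
  have hmaps : ∀ σ : Equiv.Perm (Fin n), σ ∈ (univ : Finset (Equiv.Perm (Fin n))) →
      (σ a, σ b) ∈ univ.filter (fun q : Fin n × Fin n => q.1 ≠ q.2) := by
    intro σ _
    simp only [mem_filter, mem_univ, true_and]
    exact fun hc => hab (σ.injective hc)
  have := Finset.card_eq_sum_card_fiberwise hmaps
  rw [← Fintype.card] at this
  rw [this]
  rw [Finset.sum_congr rfl (fun q' hq' => perm_fib_card a b a b hab hab q' q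
    (by simpa using (Finset.mem_filter.mp hq').2) hq), Finset.sum_const, smul_eq_mul]

lemma offdiag_card_eq {n : ℕ} :
    (univ.filter (fun q : Fin n × Fin n => q.1 ≠ q.2)).card = n * n - n := by
  have : (univ.filter (fun q : Fin n × Fin n => q.1 ≠ q.2)) = (univ : Finset (Fin n)).offDiag := by
    ext q
    simp [Finset.mem_offDiag]
  rw [this, Finset.offDiag_card]
  simp


section KendallAux

variable {Ω : Type} [MeasurableSpace Ω] {P : Measure Ω} [IsProbabilityMeasure P]

lemma integrable_of_bdd {f : Ω → ℝ} (hf : Measurable f) {C : ℝ} (hC : ∀ ω, |f ω| ≤ C) :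
    Integrable f P :=
  (integrable_const C).mono' hf.aestronglyMeasurable
    (ae_of_all _ (fun ω => by simpa using hC ω))

/-- single-factor mgf bound for a centered variable bounded by 1, at rate |c| ≤ 1 -/
lemma single_mgf_bound {g : Ω → ℝ} (hg : Measurable g) (hb : ∀ ω, |g ω| ≤ 1)
    (hmean : ∫ ω, g ω ∂P = 0) {c : ℝ} (hc : |c| ≤ 1) :
    ∫ ω, Real.exp (c * g ω) ∂P ≤ Real.exp (3 / 4 * c ^ 2) := by
  have key : ∀ ω, Real.exp (c * g ω) ≤ 1 + c * g ω + 3 / 4 * c ^ 2 := by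
    intro ω
    have h1 : |c * g ω| ≤ 1 := by
      rw [abs_mul]
      calc |c| * |g ω| ≤ 1 * 1 := mul_le_mul hc (hb ω) (abs_nonneg _) zero_le_one
        _ = 1 := by ring
    have h2 := Real.exp_bound h1 (n := 2) (by norm_num)
    have h3 : ∑ i ∈ range 2, (c * g ω) ^ i / (i.factorial : ℝ) = 1 + c * g ω := by
      simp [Finset.sum_range_succ]
    rw [h3] at h2
    norm_num [Nat.factorial] at h2
    have h5 : |c * g ω| ^ 2 = (c * g ω) ^ 2 := sq_abs _
    have h6 : (c * g ω) ^ 2 ≤ c ^ 2 := by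
      rw [mul_pow]
      have hgg : g ω ^ 2 ≤ 1 := by
        rw [← sq_abs]
        exact pow_le_one₀ (abs_nonneg _) (hb ω)
      nlinarith [sq_nonneg c]
    have := abs_le.mp h2
    rw [← abs_mul, h5] at this
    nlinarith
  have hint1 : Integrable (fun ω => Real.exp (c * g ω)) P := by
    refine integrable_of_bdd (Real.measurable_exp.comp (hg.const_mul c)) (C := Real.exp 1) ?_
    intro ω
    rw [abs_of_pos (Real.exp_pos _)]
    apply Real.exp_le_exp.mpr
    calc c * g ω ≤ |c * g ω| := le_abs_self _
      _ ≤ 1 := by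
          rw [abs_mul]
          calc |c| * |g ω| ≤ 1 * 1 := mul_le_mul hc (hb ω) (abs_nonneg _) zero_le_one
            _ = 1 := by ring
  have hintg : Integrable g P := integrable_of_bdd hg hb
  have hint2 : Integrable (fun ω => 1 + c * g ω + 3 / 4 * c ^ 2) P := by
    exact (((integrable_const 1).add (hintg.const_mul c)).add (integrable_const _))
  calc ∫ ω, Real.exp (c * g ω) ∂P ≤ ∫ ω, (1 + c * g ω + 3 / 4 * c ^ 2) ∂P :=
        integral_mono hint1 hint2 key
    _ = 1 + c * (∫ ω, g ω ∂P) + 3 / 4 * c ^ 2 := by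
        have e1 : ∫ ω, (1 + c * g ω + 3 / 4 * c ^ 2) ∂P
            = (∫ ω, (1 + c * g ω) ∂P) + ∫ (_ : Ω), (3 / 4 * c ^ 2) ∂P := by
          apply integral_add ?_ (integrable_const _)
          exact (integrable_const 1).add (hintg.const_mul c)
        have e2 : ∫ ω, (1 + c * g ω) ∂P = (∫ (_ : Ω), (1 : ℝ) ∂P) + ∫ ω, c * g ω ∂P := by
          apply integral_add (integrable_const 1)
          exact hintg.const_mul c
        rw [e1, e2, MeasureTheory.integral_const_mul, integral_const, integral_const]
        simp
    _ = 1 + 3 / 4 * c ^ 2 := by rw [hmean]; ring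
    _ ≤ Real.exp (3 / 4 * c ^ 2) := by
        have := Real.add_one_le_exp (3 / 4 * c ^ 2)
        linarith

/-- product formula for exp of a sum over independent disjoint pair-blocks -/
lemma block_prod {E : Type} [MeasurableSpace E] {n m : ℕ}
    {Z : Fin n → Ω → E} (hZ : ∀ i, Measurable (Z i))
    (hindep : iIndepFun Z P)
    (A B : Fin m → Fin n)
    (hd : ∀ k k', k ≠ k' → A k ≠ A k' ∧ A k ≠ B k' ∧ B k ≠ A k' ∧ B k ≠ B k')
    (G : Fin m → E → E → ℝ) (hG : ∀ k, Measurable (fun q : E × E => G k q.1 q.2))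
    (s : Finset (Fin m)) :
    ∫ ω, Real.exp (∑ k ∈ s, G k (Z (A k) ω) (Z (B k) ω)) ∂P
      = ∏ k ∈ s, ∫ ω, Real.exp (G k (Z (A k) ω) (Z (B k) ω)) ∂P := by
  classical
  induction s using Finset.induction_on with
  | empty => simp
  | @insert k s hk ih =>
    set T : Finset (Fin n) := s.biUnion (fun k' => {A k', B k'}) with hT
    have hmemA : ∀ k' ∈ s, A k' ∈ T := by
      intro k' hk'; simp only [hT, Finset.mem_biUnion]; exact ⟨k', hk', by simp⟩
    have hmemB : ∀ k' ∈ s, B k' ∈ T := by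
      intro k' hk'; simp only [hT, Finset.mem_biUnion]; exact ⟨k', hk', by simp⟩
    have hdisj : Disjoint ({A k, B k} : Finset (Fin n)) T := by
      rw [Finset.disjoint_left]
      intro x hx hxT
      simp only [hT, Finset.mem_biUnion, Finset.mem_insert, Finset.mem_singleton] at hxT
      obtain ⟨k', hk', h'⟩ := hxT
      have hne : k ≠ k' := fun h => hk (h ▸ hk')
      obtain ⟨h1, h2, h3, h4⟩ := hd k k' hne
      simp only [Finset.mem_insert, Finset.mem_singleton] at hx
      rcases hx with rfl | rfl <;> rcases h' with h' | h' <;> tauto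
    have hAk : A k ∈ ({A k, B k} : Finset (Fin n)) := by simp
    have hBk : B k ∈ ({A k, B k} : Finset (Fin n)) := by simp
    have hbase := hindep.indepFun_finset ({A k, B k} : Finset (Fin n)) T hdisj hZ
    let phi : (({A k, B k} : Finset (Fin n)) → E) → ℝ :=
      fun v => Real.exp (G k (v ⟨A k, hAk⟩) (v ⟨B k, hBk⟩))
    let psi : (T → E) → ℝ :=
      fun v => Real.exp (∑ k' ∈ s.attach,
        G k'.1 (v ⟨A k'.1, hmemA k'.1 k'.2⟩) (v ⟨B k'.1, hmemB k'.1 k'.2⟩))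
    have hphi : Measurable phi := by
      apply Real.measurable_exp.comp
      have M : Measurable fun v : (({A k, B k} : Finset (Fin n)) → E) =>
          ((v ⟨A k, hAk⟩, v ⟨B k, hBk⟩) : E × E) :=
        (measurable_pi_apply _).prodMk (measurable_pi_apply _)
      exact (hG k).comp M
    have hpsi : Measurable psi := by
      apply Real.measurable_exp.comp
      apply Finset.measurable_sum
      intro k' _
      have M : Measurable fun v : (T → E) =>
          ((v ⟨A k'.1, hmemA k'.1 k'.2⟩, v ⟨B k'.1, hmemB k'.1 k'.2⟩) : E × E) :=
        (measurable_pi_apply _).prodMk (measurable_pi_apply _)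
      exact (hG k'.1).comp M
    have hIF : IndepFun (fun w => Real.exp (G k (Z (A k) w) (Z (B k) w)))
        (fun w => Real.exp (∑ k' ∈ s, G k' (Z (A k') w) (Z (B k') w))) P := by
      have h2 := hbase.comp hphi hpsi
      have e2 : (psi ∘ (fun a (i : T) => Z i a))
          = fun w => Real.exp (∑ k' ∈ s, G k' (Z (A k') w) (Z (B k') w)) := by
        funext a
        simp only [Function.comp_apply, psi]
        congr 1
        exact Finset.sum_attach s (fun k' => G k' (Z (A k') a) (Z (B k') a))
      have e1 : (phi ∘ (fun a (i : ({A k, B k} : Finset (Fin n))) => Z i a))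
          = fun w => Real.exp (G k (Z (A k) w) (Z (B k) w)) := rfl
      rw [e1, e2] at h2
      exact h2
    have hmeas1 : AEStronglyMeasurable (fun w => Real.exp (G k (Z (A k) w) (Z (B k) w))) P :=
      (Real.measurable_exp.comp ((hG k).comp
        ((hZ (A k)).prodMk (hZ (B k))))).aestronglyMeasurable
    have hmeas2 : AEStronglyMeasurable
        (fun w => Real.exp (∑ k' ∈ s, G k' (Z (A k') w) (Z (B k') w))) P := by
      apply Measurable.aestronglyMeasurable
      apply Real.measurable_exp.comp
      apply Finset.measurable_sum
      intro k' _
      exact (hG k').comp ((hZ (A k')).prodMk (hZ (B k')))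
    rw [Finset.prod_insert hk, ← ih]
    simp only [Finset.sum_insert hk, Real.exp_add]
    exact hIF.integral_fun_mul_eq_mul_integral hmeas1 hmeas2


lemma ustat_tail {E : Type} [MeasurableSpace E] {n : ℕ} (hn : 2 ≤ n)
    {Z : Fin n → Ω → E} (hZ : ∀ i, Measurable (Z i))
    (hindep : iIndepFun Z P)
    (F : E → E → ℝ) (hF : Measurable (fun q : E × E => F q.1 q.2))
    (hF01 : ∀ z w, F z w ∈ Set.Icc (0 : ℝ) 1)
    {t : ℝ} (ht : 0 < t) (ht1 : t ≤ 1)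
    (U : Ω → ℝ)
    (hU : U = fun ω => (1 / ((n : ℝ) * ((n : ℝ) - 1))) *
        ∑ q ∈ univ.filter (fun q : Fin n × Fin n => q.1 ≠ q.2), F (Z q.1 ω) (Z q.2 ω)) :
    (P {ω | t ≤ U ω - ∫ ω', U ω' ∂P}).toReal
      ≤ Real.exp (-(t ^ 2 * ((n / 2 : ℕ) : ℝ) / 3)) := by
  classical
  subst hU
  set m : ℕ := n / 2 with hm
  have hm1 : 1 ≤ m := (Nat.one_le_div_iff (by norm_num)).mpr hn
  have hm2 : 2 * m ≤ n := by omega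
  have hmR : (0 : ℝ) < (m : ℝ) := by exact_mod_cast hm1
  have hnR : (2 : ℝ) ≤ (n : ℝ) := by exact_mod_cast hn
  have hn1R : (0 : ℝ) < (n : ℝ) - 1 := by linarith
  have hn0R : (0 : ℝ) < (n : ℝ) := by linarith
  have h2k : ∀ k : Fin m, 2 * (k : ℕ) < n := fun k => by have := k.isLt; omega
  have h2k1 : ∀ k : Fin m, 2 * (k : ℕ) + 1 < n := fun k => by have := k.isLt; omega
  set ia : Fin m → Fin n := fun k => ⟨2 * k, h2k k⟩ with hia
  set ib : Fin m → Fin n := fun k => ⟨2 * k + 1, h2k1 k⟩ with hib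
  have hiaib : ∀ k, ia k ≠ ib k := by
    intro k
    simp only [hia, hib, ne_eq, Fin.mk.injEq]
    omega
  set D : Finset (Fin n × Fin n) := univ.filter (fun q : Fin n × Fin n => q.1 ≠ q.2) with hD
  have hfmeas : ∀ q : Fin n × Fin n, Measurable (fun ω => F (Z q.1 ω) (Z q.2 ω)) :=
    fun q => hF.comp ((hZ q.1).prodMk (hZ q.2))
  have hfbd : ∀ (ω : Ω) (q : Fin n × Fin n), |F (Z q.1 ω) (Z q.2 ω)| ≤ 1 := by
    intro ω q
    have h := hF01 (Z q.1 ω) (Z q.2 ω)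
    rw [abs_le]
    exact ⟨by linarith [h.1], h.2⟩
  set V : Equiv.Perm (Fin n) → Ω → ℝ :=
    fun σ ω => (m : ℝ)⁻¹ * ∑ k : Fin m, F (Z (σ (ia k)) ω) (Z (σ (ib k)) ω) with hV
  have hVmeas : ∀ σ, Measurable (V σ) := by
    intro σ
    apply Measurable.const_mul
    exact Finset.measurable_sum _ (fun k _ => hfmeas (σ (ia k), σ (ib k)))
  have hVbd : ∀ σ ω, |V σ ω| ≤ 1 := by
    intro σ ω
    rw [hV]
    rw [abs_mul, abs_inv, Nat.abs_cast]
    rw [inv_mul_le_iff₀ hmR, mul_one]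
    calc |∑ k : Fin m, F (Z (σ (ia k)) ω) (Z (σ (ib k)) ω)|
        ≤ ∑ k : Fin m, |F (Z (σ (ia k)) ω) (Z (σ (ib k)) ω)| := Finset.abs_sum_le_sum_abs _ _
      _ ≤ ∑ _k : Fin m, (1 : ℝ) := Finset.sum_le_sum (fun k _ => hfbd ω (σ (ia k), σ (ib k)))
      _ = (m : ℝ) := by simp
  have hVint : ∀ σ, Integrable (V σ) P := fun σ => integrable_of_bdd (hVmeas σ) (hVbd σ)
  set Nf : ℕ := Fintype.card (Equiv.Perm (Fin n)) with hNf
  set i0 : Fin n := ⟨0, by omega⟩ with hi0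
  set i1 : Fin n := ⟨1, by omega⟩ with hi1
  have hi01 : i0 ≠ i1 := by simp [hi0, hi1, Fin.ext_iff]
  set c0 : ℕ := (univ.filter fun σ : Equiv.Perm (Fin n) => (σ i0, σ i1) = (i0, i1)).card with hc0
  have key_count : Nf = (n * n - n) * c0 := by
    rw [hNf, perm_card_eq hn i0 i1 hi01 (i0, i1) hi01, offdiag_card_eq]
  have hNfpos : 0 < Nf := by rw [hNf]; exact Fintype.card_pos
  have hc0pos : 0 < c0 := by
    rcases Nat.eq_zero_or_pos c0 with h | h
    · rw [h, mul_zero] at key_count; omega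
    · exact h
  have hc0R : (0 : ℝ) < (c0 : ℝ) := by exact_mod_cast hc0pos
  have hNfR : (0 : ℝ) < (Nf : ℝ) := by exact_mod_cast hNfpos
  have hNfcast : (Nf : ℝ) = ((n : ℝ) * (n : ℝ) - (n : ℝ)) * (c0 : ℝ) := by
    rw [key_count]
    push_cast [Nat.cast_sub (Nat.le_mul_of_pos_left n (by omega : 0 < n))]
    ring
  -- pointwise permutation-average identity
  have hsum : ∀ ω, ∑ σ : Equiv.Perm (Fin n), V σ ω
      = (c0 : ℝ) * ∑ q ∈ D, F (Z q.1 ω) (Z q.2 ω) := by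
    intro ω
    have hinner : ∀ k : Fin m, ∑ σ : Equiv.Perm (Fin n), F (Z (σ (ia k)) ω) (Z (σ (ib k)) ω)
        = (c0 : ℝ) * ∑ q ∈ D, F (Z q.1 ω) (Z q.2 ω) := by
      intro k
      have h1 := perm_pair_sum (fun q : Fin n × Fin n => F (Z q.1 ω) (Z q.2 ω))
        (ia k) (ib k) (hiaib k)
      rw [h1, Finset.mul_sum, ← hD]
      refine Finset.sum_congr rfl (fun q hq => ?_)
      have hqne : q.1 ≠ q.2 := by
        rw [hD] at hq
        exact (Finset.mem_filter.mp hq).2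
      rw [perm_fib_card (ia k) (ib k) i0 i1 (hiaib k) hi01 q (i0, i1) hqne hi01, ← hc0]
    calc ∑ σ : Equiv.Perm (Fin n), V σ ω
        = (m : ℝ)⁻¹ * ∑ σ : Equiv.Perm (Fin n),
            ∑ k : Fin m, F (Z (σ (ia k)) ω) (Z (σ (ib k)) ω) := by
          rw [Finset.mul_sum]
      _ = (m : ℝ)⁻¹ * ∑ k : Fin m, ∑ σ : Equiv.Perm (Fin n),
            F (Z (σ (ia k)) ω) (Z (σ (ib k)) ω) := by rw [Finset.sum_comm]
      _ = (m : ℝ)⁻¹ * ∑ _k : Fin m, (c0 : ℝ) * ∑ q ∈ D, F (Z q.1 ω) (Z q.2 ω) := by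
          rw [Finset.sum_congr rfl (fun k _ => hinner k)]
      _ = (c0 : ℝ) * ∑ q ∈ D, F (Z q.1 ω) (Z q.2 ω) := by
          rw [Finset.sum_const, Finset.card_univ, Fintype.card_fin, nsmul_eq_mul]
          field_simp
  -- representation of U via averages
  set U : Ω → ℝ := fun ω => (1 / ((n : ℝ) * ((n : ℝ) - 1))) *
      ∑ q ∈ D, F (Z q.1 ω) (Z q.2 ω) with hUdef
  have hUmeas : Measurable U :=
    (Finset.measurable_sum _ (fun q _ => hfmeas q)).const_mul _
  have hDcardR : ((D.card : ℕ) : ℝ) = (n : ℝ) * ((n : ℝ) - 1) := by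
    rw [hD, offdiag_card_eq]
    push_cast [Nat.cast_sub (Nat.le_mul_of_pos_left n (by omega : 0 < n))]
    ring
  have hUbd : ∀ ω, |U ω| ≤ 1 := by
    intro ω
    rw [hUdef]
    have habs : |∑ q ∈ D, F (Z q.1 ω) (Z q.2 ω)| ≤ (D.card : ℝ) := by
      calc |∑ q ∈ D, F (Z q.1 ω) (Z q.2 ω)| ≤ ∑ q ∈ D, |F (Z q.1 ω) (Z q.2 ω)| :=
            Finset.abs_sum_le_sum_abs _ _
        _ ≤ ∑ _q ∈ D, (1 : ℝ) := Finset.sum_le_sum (fun q _ => hfbd ω q)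
        _ = (D.card : ℝ) := by simp
    rw [abs_mul]
    have hco : |1 / ((n : ℝ) * ((n : ℝ) - 1))| = 1 / ((n : ℝ) * ((n : ℝ) - 1)) :=
      abs_of_pos (by positivity)
    rw [hco]
    rw [div_mul_eq_mul_div, one_mul, div_le_one (by positivity)]
    calc |∑ q ∈ D, F (Z q.1 ω) (Z q.2 ω)| ≤ (D.card : ℝ) := habs
      _ = (n : ℝ) * ((n : ℝ) - 1) := hDcardR
  have hUint : Integrable U P := integrable_of_bdd hUmeas hUbd
  have hUrep0 : ∀ ω, U ω = (Nf : ℝ)⁻¹ * ∑ σ : Equiv.Perm (Fin n), V σ ω := by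
    intro ω
    have hscal : ((((n : ℝ) * (n : ℝ) - (n : ℝ)) * (c0 : ℝ))⁻¹) * (c0 : ℝ)
        = 1 / ((n : ℝ) * ((n : ℝ) - 1)) := by
      have h1 : (n : ℝ) * (n : ℝ) - (n : ℝ) = (n : ℝ) * ((n : ℝ) - 1) := by ring
      rw [h1, mul_inv, mul_assoc, inv_mul_cancel₀ hc0R.ne', mul_one, one_div]
    calc U ω = (1 / ((n : ℝ) * ((n : ℝ) - 1))) * ∑ q ∈ D, F (Z q.1 ω) (Z q.2 ω) := rfl
      _ = ((((n : ℝ) * (n : ℝ) - (n : ℝ)) * (c0 : ℝ))⁻¹)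
            * ((c0 : ℝ) * ∑ q ∈ D, F (Z q.1 ω) (Z q.2 ω)) := by
          rw [← mul_assoc, hscal]
      _ = (Nf : ℝ)⁻¹ * ∑ σ : Equiv.Perm (Fin n), V σ ω := by rw [hsum ω, hNfcast]
  -- expectation of U as average of expectations of V
  have hUmean : ∫ ω, U ω ∂P = (Nf : ℝ)⁻¹ * ∑ σ : Equiv.Perm (Fin n), ∫ ω, V σ ω ∂P := by
    have h1 : ∫ ω, U ω ∂P = ∫ ω, (Nf : ℝ)⁻¹ * ∑ σ : Equiv.Perm (Fin n), V σ ω ∂P := by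
      apply integral_congr_ae
      filter_upwards with ω using hUrep0 ω
    rw [h1, MeasureTheory.integral_const_mul, integral_finset_sum _ (fun σ _ => hVint σ)]
  -- centered representation
  have hUrep : ∀ ω, U ω - ∫ ω', U ω' ∂P
      = ∑ σ : Equiv.Perm (Fin n), (Nf : ℝ)⁻¹ * (V σ ω - ∫ ω', V σ ω' ∂P) := by
    intro ω
    rw [hUrep0 ω, hUmean, ← mul_sub, ← Finset.sum_sub_distrib, Finset.mul_sum]
  -- rate parameters
  set c : ℝ := 2 / 3 * t with hcdef
  set s : ℝ := c * (m : ℝ) with hsdef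
  have hcpos : 0 < c := by rw [hcdef]; linarith
  have hc1 : |c| ≤ 1 := by
    rw [abs_of_pos hcpos, hcdef]; linarith
  have hspos : 0 < s := by rw [hsdef]; positivity
  -- per-permutation mgf bound
  have hper : ∀ σ : Equiv.Perm (Fin n),
      ∫ ω, Real.exp (s * (V σ ω - ∫ ω', V σ ω' ∂P)) ∂P
        ≤ Real.exp (3 / 4 * c ^ 2 * (m : ℝ)) := by
    intro σ
    set g : Fin m → Ω → ℝ := fun k ω => F (Z (σ (ia k)) ω) (Z (σ (ib k)) ω) with hg
    have hgmeas : ∀ k, Measurable (g k) := fun k => hfmeas (σ (ia k), σ (ib k))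
    have hgbd : ∀ k ω, |g k ω| ≤ 1 := fun k ω => hfbd ω (σ (ia k), σ (ib k))
    have hgint : ∀ k, Integrable (g k) P := fun k => integrable_of_bdd (hgmeas k) (hgbd k)
    set mu : Fin m → ℝ := fun k => ∫ ω, g k ω ∂P with hmu
    have hmubd : ∀ k, |mu k| ≤ 1 := by
      intro k
      rw [hmu]
      calc |∫ ω, g k ω ∂P| ≤ ∫ ω, |g k ω| ∂P := by
            simpa [Real.norm_eq_abs] using
              MeasureTheory.norm_integral_le_integral_norm (μ := P) (fun ω => g k ω)
        _ ≤ ∫ (_ : Ω), (1 : ℝ) ∂P := integral_mono (hgint k).abs (integrable_const 1)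
            (fun ω => hgbd k ω)
        _ = 1 := by simp
    have hVmean : ∫ ω', V σ ω' ∂P = (m : ℝ)⁻¹ * ∑ k : Fin m, mu k := by
      have : V σ = fun ω => (m : ℝ)⁻¹ * ∑ k : Fin m, g k ω := rfl
      rw [this, MeasureTheory.integral_const_mul, integral_finset_sum _ (fun k _ => hgint k)]
    have hexp : ∀ ω, s * (V σ ω - ∫ ω', V σ ω' ∂P)
        = ∑ k : Fin m, c * (g k ω - mu k) := by
      intro ω
      have h1 : V σ ω = (m : ℝ)⁻¹ * ∑ k : Fin m, g k ω := rfl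
      have h2 : ∑ k : Fin m, c * (g k ω - mu k)
          = c * ((∑ k : Fin m, g k ω) - ∑ k : Fin m, mu k) := by
        rw [← Finset.mul_sum, Finset.sum_sub_distrib]
      rw [hVmean, h1, h2, hsdef, ← mul_sub ((m : ℝ))⁻¹]
      have h3 : ∀ A : ℝ, c * (m : ℝ) * ((m : ℝ)⁻¹ * A) = c * ((m : ℝ) * (m : ℝ)⁻¹) * A := by
        intro A; ring
      rw [h3, mul_inv_cancel₀ hmR.ne', mul_one]
    have hblock : ∫ ω, Real.exp (∑ k : Fin m, c * (g k ω - mu k)) ∂P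
        = ∏ k : Fin m, ∫ ω, Real.exp (c * (g k ω - mu k)) ∂P := by
      have hd : ∀ k k' : Fin m, k ≠ k' →
          σ (ia k) ≠ σ (ia k') ∧ σ (ia k) ≠ σ (ib k') ∧
          σ (ib k) ≠ σ (ia k') ∧ σ (ib k) ≠ σ (ib k') := by
        intro k k' hne
        have hv : (k : ℕ) ≠ (k' : ℕ) := by
          intro h; exact hne (Fin.ext h)
        refine ⟨?_, ?_, ?_, ?_⟩ <;>
          · intro h
            have h2 := σ.injective h
            simp only [hia, hib, Fin.mk.injEq] at h2
            omega
      exact block_prod hZ hindep (fun k => σ (ia k)) (fun k => σ (ib k)) hd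
        (fun k z w => c * ((F z w) - mu k))
        (fun k => ((hF.sub measurable_const).const_mul c)) univ
    have hfactor : ∀ k : Fin m, ∫ ω, Real.exp (c * (g k ω - mu k)) ∂P
        ≤ Real.exp (3 / 4 * c ^ 2) := by
      intro k
      apply single_mgf_bound (g := fun ω => g k ω - mu k) ((hgmeas k).sub measurable_const) ?_ ?_ hc1
      · intro ω
        have h1 := hgbd k ω
        have h2 := hmubd k
        have h3 := hF01 (Z (σ (ia k)) ω) (Z (σ (ib k)) ω)
        have h4 : 0 ≤ mu k := integral_nonneg (fun ω' => (hF01 _ _).1)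
        rw [abs_le] at h2 ⊢
        constructor
        · have := h3.1; simp only [hg]; linarith [h2.2]
        · have := h3.2; simp only [hg]; linarith
      · rw [integral_sub (hgint k) (integrable_const _), integral_const]
        simp [hmu]
    calc ∫ ω, Real.exp (s * (V σ ω - ∫ ω', V σ ω' ∂P)) ∂P
        = ∫ ω, Real.exp (∑ k : Fin m, c * (g k ω - mu k)) ∂P := by
          apply integral_congr_ae
          filter_upwards with ω
          rw [hexp ω]
      _ = ∏ k : Fin m, ∫ ω, Real.exp (c * (g k ω - mu k)) ∂P := hblock
      _ ≤ ∏ _k : Fin m, Real.exp (3 / 4 * c ^ 2) := by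
          apply Finset.prod_le_prod
          · intro k _
            exact integral_nonneg (fun ω => (Real.exp_pos _).le)
          · intro k _
            exact hfactor k
      _ = Real.exp (3 / 4 * c ^ 2 * (m : ℝ)) := by
          rw [Finset.prod_const, Finset.card_univ, Fintype.card_fin, ← Real.exp_nat_mul]
          congr 1
          ring
  have hU'meas : Measurable (fun ω => U ω - ∫ ω', U ω' ∂P) := hUmeas.sub measurable_const
  have hU'bd : ∀ ω, |U ω - ∫ ω', U ω' ∂P| ≤ 2 := by
    intro ω
    have h1 : |∫ ω', U ω' ∂P| ≤ 1 := by
      calc |∫ ω', U ω' ∂P| ≤ ∫ ω', |U ω'| ∂P := by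
            simpa [Real.norm_eq_abs] using
              MeasureTheory.norm_integral_le_integral_norm (μ := P) (fun ω => U ω)
        _ ≤ ∫ (_ : Ω), (1 : ℝ) ∂P := integral_mono hUint.abs (integrable_const 1)
            (fun ω' => hUbd ω')
        _ = 1 := by simp
    have h2 := abs_le.mp (hUbd ω)
    have h3 := abs_le.mp h1
    rw [abs_le]
    constructor <;> [linarith; linarith]
  have hV'meas : ∀ σ, Measurable (fun ω => V σ ω - ∫ ω', V σ ω' ∂P) :=
    fun σ => (hVmeas σ).sub measurable_const
  have hV'bd : ∀ σ ω, |V σ ω - ∫ ω', V σ ω' ∂P| ≤ 2 := by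
    intro σ ω
    have h1 : |∫ ω', V σ ω' ∂P| ≤ 1 := by
      calc |∫ ω', V σ ω' ∂P| ≤ ∫ ω', |V σ ω'| ∂P := by
            simpa [Real.norm_eq_abs] using
              MeasureTheory.norm_integral_le_integral_norm (μ := P) (fun ω => V σ ω)
        _ ≤ ∫ (_ : Ω), (1 : ℝ) ∂P := integral_mono (hVint σ).abs (integrable_const 1)
            (fun ω' => hVbd σ ω')
        _ = 1 := by simp
    have h2 := abs_le.mp (hVbd σ ω)
    have h3 := abs_le.mp h1
    rw [abs_le]
    constructor <;> [linarith; linarith]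
  have hexpint : ∀ (X : Ω → ℝ), Measurable X → (∀ ω, |X ω| ≤ 2) →
      Integrable (fun ω => Real.exp (s * X ω)) P := by
    intro X hXm hXb
    refine integrable_of_bdd (Real.measurable_exp.comp (hXm.const_mul s))
      (C := Real.exp (s * 2)) ?_
    intro ω
    rw [abs_of_pos (Real.exp_pos _)]
    apply Real.exp_le_exp.mpr
    have h := abs_le.mp (hXb ω)
    nlinarith [hspos.le]
  have hintU : Integrable (fun ω => Real.exp (s * (U ω - ∫ ω', U ω' ∂P))) P :=
    hexpint _ hU'meas hU'bd
  have hintV : ∀ σ, Integrable (fun ω => Real.exp (s * (V σ ω - ∫ ω', V σ ω' ∂P))) P :=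
    fun σ => hexpint _ (hV'meas σ) (hV'bd σ)
  have hjen : ∀ ω, Real.exp (s * (U ω - ∫ ω', U ω' ∂P))
      ≤ ∑ σ : Equiv.Perm (Fin n), (Nf : ℝ)⁻¹ * Real.exp (s * (V σ ω - ∫ ω', V σ ω' ∂P)) := by
    intro ω
    have hw1 : ∑ _σ : Equiv.Perm (Fin n), (Nf : ℝ)⁻¹ = 1 := by
      rw [Finset.sum_const, Finset.card_univ, ← hNf, nsmul_eq_mul, mul_inv_cancel₀ hNfR.ne']
    have h1 := convexOn_exp.map_sum_le (t := (univ : Finset (Equiv.Perm (Fin n))))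
      (w := fun _ => (Nf : ℝ)⁻¹)
      (p := fun σ => s * (V σ ω - ∫ ω', V σ ω' ∂P))
      (fun _ _ => inv_nonneg.mpr (Nat.cast_nonneg _)) hw1 (fun _ _ => Set.mem_univ _)
    have e : s * (U ω - ∫ ω', U ω' ∂P)
        = ∑ σ : Equiv.Perm (Fin n), (Nf : ℝ)⁻¹ • (s * (V σ ω - ∫ ω', V σ ω' ∂P)) := by
      rw [hUrep ω, Finset.mul_sum]
      refine Finset.sum_congr rfl (fun σ _ => ?_)
      rw [smul_eq_mul]
      ring
    rw [e]
    refine h1.trans (le_of_eq ?_)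
    exact Finset.sum_congr rfl (fun σ _ => by rw [smul_eq_mul])
  have hmgf : ∫ ω, Real.exp (s * (U ω - ∫ ω', U ω' ∂P)) ∂P
      ≤ Real.exp (3 / 4 * c ^ 2 * (m : ℝ)) := by
    calc ∫ ω, Real.exp (s * (U ω - ∫ ω', U ω' ∂P)) ∂P
        ≤ ∫ ω, (∑ σ : Equiv.Perm (Fin n), (Nf : ℝ)⁻¹
            * Real.exp (s * (V σ ω - ∫ ω', V σ ω' ∂P))) ∂P := by
          apply integral_mono hintU ?_ hjen
          exact integrable_finset_sum _ (fun σ _ => (hintV σ).const_mul _)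
      _ = ∑ σ : Equiv.Perm (Fin n), (Nf : ℝ)⁻¹
            * ∫ ω, Real.exp (s * (V σ ω - ∫ ω', V σ ω' ∂P)) ∂P := by
          rw [integral_finset_sum _ (fun σ _ => (hintV σ).const_mul _)]
          exact Finset.sum_congr rfl (fun σ _ => MeasureTheory.integral_const_mul _ _)
      _ ≤ ∑ _σ : Equiv.Perm (Fin n), (Nf : ℝ)⁻¹ * Real.exp (3 / 4 * c ^ 2 * (m : ℝ)) := by
          refine Finset.sum_le_sum (fun σ _ => ?_)
          exact mul_le_mul_of_nonneg_left (hper σ) (inv_nonneg.mpr (Nat.cast_nonneg _))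
      _ = Real.exp (3 / 4 * c ^ 2 * (m : ℝ)) := by
          rw [Finset.sum_const, Finset.card_univ, ← hNf, nsmul_eq_mul, ← mul_assoc,
            mul_inv_cancel₀ hNfR.ne', one_mul]
  have hch := measure_ge_le_exp_mul_mgf (μ := P)
    (X := fun ω => U ω - ∫ ω', U ω' ∂P) (t := s) t hspos.le hintU
  have hmgfeq : mgf (fun ω => U ω - ∫ ω', U ω' ∂P) P s
      = ∫ ω, Real.exp (s * (U ω - ∫ ω', U ω' ∂P)) ∂P := rfl
  rw [hmgfeq] at hch
  refine hch.trans ?_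
  calc Real.exp (-s * t) * ∫ ω, Real.exp (s * (U ω - ∫ ω', U ω' ∂P)) ∂P
      ≤ Real.exp (-s * t) * Real.exp (3 / 4 * c ^ 2 * (m : ℝ)) :=
        mul_le_mul_of_nonneg_left hmgf (Real.exp_pos _).le
    _ = Real.exp (-(t ^ 2 * (m : ℝ) / 3)) := by
        rw [← Real.exp_add]
        congr 1
        rw [hsdef, hcdef]
        ring


end KendallAux

lemma coeff_card_mul {n : ℕ} (hn : 2 ≤ n) :
    (1 / ((n : ℝ) * ((n : ℝ) - 1))) *
      (((univ.filter (fun q : Fin n × Fin n => q.1 ≠ q.2)).card : ℕ) : ℝ) = 1 := by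
  have hnR : (2 : ℝ) ≤ (n : ℝ) := by exact_mod_cast hn
  rw [offdiag_card_eq]
  have h : ((n * n - n : ℕ) : ℝ) = (n : ℝ) * ((n : ℝ) - 1) := by
    push_cast [Nat.cast_sub (Nat.le_mul_of_pos_left n (by omega : 0 < n))]
    ring
  rw [h, one_div, inv_mul_cancel₀ (by nlinarith : ((n : ℝ) * ((n : ℝ) - 1)) ≠ 0)]

lemma U_bdd {n : ℕ} (hn : 2 ≤ n) (g : Fin n × Fin n → ℝ) (hg : ∀ q, |g q| ≤ 1) :
    |(1 / ((n : ℝ) * ((n : ℝ) - 1))) *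
      ∑ q ∈ univ.filter (fun q : Fin n × Fin n => q.1 ≠ q.2), g q| ≤ 1 := by
  have hnR : (2 : ℝ) ≤ (n : ℝ) := by exact_mod_cast hn
  have hpos : (0 : ℝ) < 1 / ((n : ℝ) * ((n : ℝ) - 1)) := by
    apply div_pos one_pos
    nlinarith
  set D := univ.filter (fun q : Fin n × Fin n => q.1 ≠ q.2) with hD
  rw [abs_mul, abs_of_pos hpos]
  calc (1 / ((n : ℝ) * ((n : ℝ) - 1))) * |∑ q ∈ D, g q|
      ≤ (1 / ((n : ℝ) * ((n : ℝ) - 1))) * (D.card : ℝ) := by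
        apply mul_le_mul_of_nonneg_left ?_ hpos.le
        calc |∑ q ∈ D, g q| ≤ ∑ q ∈ D, |g q| := Finset.abs_sum_le_sum_abs _ _
          _ ≤ ∑ _q ∈ D, (1 : ℝ) := Finset.sum_le_sum (fun q _ => hg q)
          _ = (D.card : ℝ) := by simp
    _ = 1 := coeff_card_mul hn

/-- **Uniform concentration for the marginal Kendall rank statistics:** for any
`κ ∈ (0,1/2)` and `c₃ > 0` there are `c₄ > 0` and `N ≥ 2` such that for all `n ≥ N`, all
`p ≥ 1` and all i.i.d. samples `(X_i, Y_i) ∈ ℝ^p × ℝ`, `i = 1,…,n`,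
`P(max_{1≤j≤p} |ω_j - E ω_j| ≥ c₃ n^{-κ}) ≤ p exp(-c₄ n^{1-2κ})`. -/
theorem max_kendall_statistic_concentration :
    ∀ κ ∈ Set.Ioo (0 : ℝ) (1 / 2), ∀ c₃ > (0 : ℝ),
      ∃ c₄ > (0 : ℝ), ∃ N : ℕ, 2 ≤ N ∧
        ∀ n : ℕ, N ≤ n → ∀ p : ℕ, ∀ hp : 1 ≤ p,
          ∀ (Ω : Type) (_ : MeasurableSpace Ω) (P : Measure Ω),
            IsProbabilityMeasure P →
          ∀ (X : Fin n → Ω → (Fin p → ℝ)) (Y : Fin n → Ω → ℝ),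
            (∀ i, Measurable (X i)) → (∀ i, Measurable (Y i)) →
            iIndepFun (fun i ω => (X i ω, Y i ω)) P →
            (∀ i l, P.map (fun ω => (X i ω, Y i ω)) = P.map (fun ω => (X l ω, Y l ω))) →
          ∀ W : Fin p → Ω → ℝ,
            (∀ j a, W j a = (1 / ((n : ℝ) * ((n : ℝ) - 1))) *
                ∑ q ∈ (Finset.univ : Finset (Fin n × Fin n)).filter (fun q => q.1 ≠ q.2),
                  (if X q.1 a j < X q.2 a j then (1 : ℝ) else 0) *
                    (if Y q.1 a < Y q.2 a then (1 : ℝ) else 0)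
              - 1 / 4) →
          (P {a | c₃ * (n : ℝ) ^ (-κ) ≤
              (Finset.univ : Finset (Fin p)).sup' ⟨⟨0, hp⟩, Finset.mem_univ _⟩
                (fun j => |W j a - ∫ a', W j a' ∂P|)}).toReal
            ≤ (p : ℝ) * Real.exp (-c₄ * (n : ℝ) ^ (1 - 2 * κ)) := by
  rintro κ ⟨hκ0, hκ2⟩ c₃ hc₃
  have h12 : 0 < 1 - 2 * κ := by linarith
  refine ⟨c₃ ^ 2 / 24, by positivity, ?_⟩
  obtain ⟨N₀, hN₀⟩ := exists_nat_ge (max ((24 / c₃ ^ 2) ^ (1 - 2 * κ)⁻¹) (c₃ ^ κ⁻¹))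
  refine ⟨max N₀ 2, le_max_right _ _, ?_⟩
  intro n hn p hp Ω mΩ P hP X Y hX hY hindep _hident W hW
  haveI := hP
  have hn2 : 2 ≤ n := le_trans (le_max_right _ _) hn
  have hnR : (2 : ℝ) ≤ (n : ℝ) := by exact_mod_cast hn2
  have hn0 : (0 : ℝ) < (n : ℝ) := by linarith
  have hnN₀ : (max ((24 / c₃ ^ 2) ^ (1 - 2 * κ)⁻¹) (c₃ ^ κ⁻¹) : ℝ) ≤ (n : ℝ) := by
    refine hN₀.trans ?_
    exact_mod_cast le_trans (le_max_left N₀ 2) hn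
  set t : ℝ := c₃ * (n : ℝ) ^ (-κ) with htdef
  have hnκpos : (0 : ℝ) < (n : ℝ) ^ (-κ) := Real.rpow_pos_of_pos hn0 _
  have ht0 : 0 < t := by rw [htdef]; positivity
  have hnκ : c₃ ≤ (n : ℝ) ^ κ := by
    have h1 : c₃ ^ κ⁻¹ ≤ (n : ℝ) := le_trans (le_max_right _ _) hnN₀
    calc c₃ = (c₃ ^ κ⁻¹) ^ κ := (Real.rpow_inv_rpow hc₃.le hκ0.ne').symm
      _ ≤ (n : ℝ) ^ κ := Real.rpow_le_rpow (Real.rpow_nonneg hc₃.le _) h1 hκ0.le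
  have ht1 : t ≤ 1 := by
    have hx : (0 : ℝ) < (n : ℝ) ^ κ := Real.rpow_pos_of_pos hn0 _
    rw [htdef, Real.rpow_neg hn0.le]
    calc c₃ * ((n : ℝ) ^ κ)⁻¹ ≤ ((n : ℝ) ^ κ) * ((n : ℝ) ^ κ)⁻¹ :=
          mul_le_mul_of_nonneg_right hnκ (inv_nonneg.mpr hx.le)
      _ = 1 := mul_inv_cancel₀ hx.ne'
  -- the sample variables
  set Z : Fin n → Ω → (Fin p → ℝ) × ℝ := fun i ω => (X i ω, Y i ω) with hZdef
  have hZ : ∀ i, Measurable (Z i) := fun i => (hX i).prodMk (hY i)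
  -- kernels
  set Fp : Fin p → ((Fin p → ℝ) × ℝ) → ((Fin p → ℝ) × ℝ) → ℝ :=
    fun j z w => (if z.1 j < w.1 j then (1 : ℝ) else 0) * (if z.2 < w.2 then (1 : ℝ) else 0)
    with hFpdef
  have hFpmeas : ∀ j, Measurable (fun q : ((Fin p → ℝ) × ℝ) × ((Fin p → ℝ) × ℝ) =>
      Fp j q.1 q.2) := by
    intro j
    apply Measurable.mul
    · refine Measurable.ite ?_ measurable_const measurable_const
      exact measurableSet_lt (measurable_fst.fst.eval) (measurable_snd.fst.eval)
    · refine Measurable.ite ?_ measurable_const measurable_const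
      exact measurableSet_lt measurable_fst.snd measurable_snd.snd
  have hFp01 : ∀ j z w, Fp j z w ∈ Set.Icc (0 : ℝ) 1 := by
    intro j z w
    simp only [hFpdef, Set.mem_Icc]
    split_ifs <;> norm_num
  have hFm01 : ∀ j z w, (1 - Fp j z w) ∈ Set.Icc (0 : ℝ) 1 := by
    intro j z w
    have h := hFp01 j z w
    rw [Set.mem_Icc] at h ⊢
    exact ⟨by linarith [h.2], by linarith [h.1]⟩
  -- U-statistics
  set U : Fin p → Ω → ℝ := fun j a => (1 / ((n : ℝ) * ((n : ℝ) - 1))) *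
      ∑ q ∈ (Finset.univ : Finset (Fin n × Fin n)).filter (fun q => q.1 ≠ q.2),
        Fp j (Z q.1 a) (Z q.2 a) with hUdef
  set Um : Fin p → Ω → ℝ := fun j a => (1 / ((n : ℝ) * ((n : ℝ) - 1))) *
      ∑ q ∈ (Finset.univ : Finset (Fin n × Fin n)).filter (fun q => q.1 ≠ q.2),
        (1 - Fp j (Z q.1 a) (Z q.2 a)) with hUmdef
  have hUmeas : ∀ j, Measurable (U j) := by
    intro j
    apply Measurable.const_mul
    exact Finset.measurable_sum _
      (fun q _ => (hFpmeas j).comp ((hZ q.1).prodMk (hZ q.2)))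
  have hUbd : ∀ j a, |U j a| ≤ 1 := by
    intro j a
    apply U_bdd hn2
    intro q
    have h := hFp01 j (Z q.1 a) (Z q.2 a)
    rw [Set.mem_Icc] at h
    rw [abs_le]
    exact ⟨by linarith [h.1], h.2⟩
  have hUint : ∀ j, Integrable (U j) P :=
    fun j => integrable_of_bdd (hUmeas j) (hUbd j)
  -- relation between W and U
  have hWU : ∀ j a, W j a = U j a - 1 / 4 := by
    intro j a
    rw [hW j a]
  have hWmean : ∀ j, ∫ a', W j a' ∂P = (∫ a', U j a' ∂P) - 1 / 4 := by
    intro j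
    have hWfun : W j = fun a => U j a - 1 / 4 := funext (hWU j)
    rw [hWfun, integral_sub (hUint j) (integrable_const _), integral_const]
    simp
  have hcenter : ∀ j a, W j a - ∫ a', W j a' ∂P = U j a - ∫ a', U j a' ∂P := by
    intro j a
    rw [hWU j a, hWmean j]
    ring
  -- relation between Um and U
  have hUmU : ∀ j a, Um j a = 1 - U j a := by
    intro j a
    have h1 : Um j a = (1 / ((n : ℝ) * ((n : ℝ) - 1))) *
        ∑ q ∈ (Finset.univ : Finset (Fin n × Fin n)).filter (fun q => q.1 ≠ q.2),
          (1 - Fp j (Z q.1 a) (Z q.2 a)) := rfl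
    have h2 : U j a = (1 / ((n : ℝ) * ((n : ℝ) - 1))) *
        ∑ q ∈ (Finset.univ : Finset (Fin n × Fin n)).filter (fun q => q.1 ≠ q.2),
          Fp j (Z q.1 a) (Z q.2 a) := rfl
    have h3 : ∑ q ∈ (Finset.univ : Finset (Fin n × Fin n)).filter (fun q => q.1 ≠ q.2),
        (1 - Fp j (Z q.1 a) (Z q.2 a))
        = ((((Finset.univ : Finset (Fin n × Fin n)).filter
            (fun q => q.1 ≠ q.2)).card : ℕ) : ℝ)
          - ∑ q ∈ (Finset.univ : Finset (Fin n × Fin n)).filter (fun q => q.1 ≠ q.2),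
            Fp j (Z q.1 a) (Z q.2 a) := by
      rw [Finset.sum_sub_distrib, Finset.sum_const, nsmul_eq_mul, mul_one]
    rw [h1, h2, h3, mul_sub, coeff_card_mul hn2]
  have hUmint : ∀ j, Integrable (Um j) P := by
    intro j
    have : Um j = fun a => 1 - U j a := funext (hUmU j)
    rw [this]
    exact (integrable_const 1).sub (hUint j)
  have hUmmean : ∀ j, ∫ a', Um j a' ∂P = 1 - ∫ a', U j a' ∂P := by
    intro j
    have : Um j = fun a => 1 - U j a := funext (hUmU j)
    rw [this, integral_sub (integrable_const 1) (hUint j), integral_const]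
    simp
  have hUmcenter : ∀ j a, Um j a - ∫ a', Um j a' ∂P = (∫ a', U j a' ∂P) - U j a := by
    intro j a
    rw [hUmU j a, hUmmean j]
    ring
  -- tail sets
  set A : Fin p → Set Ω := fun j => {a | t ≤ U j a - ∫ a', U j a' ∂P} with hA
  set B : Fin p → Set Ω := fun j => {a | t ≤ Um j a - ∫ a', Um j a' ∂P} with hB
  set e₀ : ℝ := Real.exp (-(t ^ 2 * ((n / 2 : ℕ) : ℝ) / 3)) with he₀
  have hPA : ∀ j, (P (A j)).toReal ≤ e₀ := by
    intro j
    exact ustat_tail hn2 hZ hindep (Fp j) (hFpmeas j) (hFp01 j) ht0 ht1 (U j) rfl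
  have hPB : ∀ j, (P (B j)).toReal ≤ e₀ := by
    intro j
    refine ustat_tail hn2 hZ hindep (fun z w => 1 - Fp j z w) ?_ (hFm01 j) ht0 ht1 (Um j) rfl
    exact measurable_const.sub (hFpmeas j)
  -- union bound
  have hsub : {a | t ≤ (Finset.univ : Finset (Fin p)).sup' ⟨⟨0, hp⟩, Finset.mem_univ _⟩
      (fun j => |W j a - ∫ a', W j a' ∂P|)} ⊆ ⋃ j : Fin p, (A j ∪ B j) := by
    intro a ha
    simp only [Set.mem_setOf_eq] at ha
    obtain ⟨j, -, hj⟩ := (Finset.le_sup'_iff _).mp ha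
    rw [hcenter j a] at hj
    rcases le_abs.mp hj with h | h
    · exact Set.mem_iUnion.mpr ⟨j, Or.inl h⟩
    · refine Set.mem_iUnion.mpr ⟨j, Or.inr ?_⟩
      show t ≤ Um j a - ∫ a', Um j a' ∂P
      rw [hUmcenter j a]
      linarith
  have hmain : (P {a | t ≤ (Finset.univ : Finset (Fin p)).sup' ⟨⟨0, hp⟩, Finset.mem_univ _⟩
      (fun j => |W j a - ∫ a', W j a' ∂P|)}).toReal ≤ (p : ℝ) * (2 * e₀) := by
    have h1 : P {a | t ≤ (Finset.univ : Finset (Fin p)).sup' ⟨⟨0, hp⟩, Finset.mem_univ _⟩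
        (fun j => |W j a - ∫ a', W j a' ∂P|)} ≤ ∑ j : Fin p, (P (A j) + P (B j)) := by
      calc P _ ≤ P (⋃ j : Fin p, (A j ∪ B j)) := measure_mono hsub
        _ ≤ ∑' j : Fin p, P (A j ∪ B j) := measure_iUnion_le _
        _ = ∑ j : Fin p, P (A j ∪ B j) := tsum_fintype _
        _ ≤ ∑ j : Fin p, (P (A j) + P (B j)) :=
            Finset.sum_le_sum (fun j _ => measure_union_le _ _)
    have hne : (∑ j : Fin p, (P (A j) + P (B j))) ≠ ⊤ := by
      refine (ENNReal.sum_lt_top.mpr (fun j _ => ?_)).ne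
      exact ENNReal.add_lt_top.mpr ⟨measure_lt_top P _, measure_lt_top P _⟩
    have h2 := ENNReal.toReal_mono hne h1
    refine h2.trans ?_
    rw [ENNReal.toReal_sum (fun j _ => ENNReal.add_ne_top.mpr
      ⟨measure_ne_top P _, measure_ne_top P _⟩)]
    calc ∑ j : Fin p, (P (A j) + P (B j)).toReal
        = ∑ j : Fin p, ((P (A j)).toReal + (P (B j)).toReal) := by
          refine Finset.sum_congr rfl (fun j _ => ?_)
          rw [ENNReal.toReal_add (measure_ne_top P _) (measure_ne_top P _)]
      _ ≤ ∑ _j : Fin p, (e₀ + e₀) :=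
          Finset.sum_le_sum (fun j _ => add_le_add (hPA j) (hPB j))
      _ = (p : ℝ) * (2 * e₀) := by
          rw [Finset.sum_const, Finset.card_univ, Fintype.card_fin, nsmul_eq_mul]
          ring
  refine hmain.trans ?_
  -- final numerics
  set R : ℝ := (n : ℝ) ^ (1 - 2 * κ) with hR
  have hy2n : ((n : ℝ) ^ (-κ)) ^ 2 * (n : ℝ) = R := by
    have h1 : ((n : ℝ) ^ (-κ)) ^ 2 = (n : ℝ) ^ (-(2 * κ)) := by
      rw [← Real.rpow_natCast ((n : ℝ) ^ (-κ)) 2, ← Real.rpow_mul hn0.le]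
      congr 1
      push_cast
      ring
    calc ((n : ℝ) ^ (-κ)) ^ 2 * (n : ℝ)
        = (n : ℝ) ^ (-(2 * κ)) * (n : ℝ) ^ (1 : ℝ) := by rw [h1, Real.rpow_one]
      _ = (n : ℝ) ^ (-(2 * κ) + 1) := (Real.rpow_add hn0 _ _).symm
      _ = R := by rw [hR]; congr 1; ring
  have hm4 : (n : ℝ) ≤ 4 * ((n / 2 : ℕ) : ℝ) := by
    have h : n ≤ 4 * (n / 2) := by omega
    exact_mod_cast h
  have hL : c₃ ^ 2 * R / 12 ≤ t ^ 2 * ((n / 2 : ℕ) : ℝ) / 3 := by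
    have ht2 : t ^ 2 = c₃ ^ 2 * ((n : ℝ) ^ (-κ)) ^ 2 := by rw [htdef]; ring
    have h0 : (0 : ℝ) ≤ c₃ ^ 2 * ((n : ℝ) ^ (-κ)) ^ 2 := by positivity
    have step1 : c₃ ^ 2 * ((n : ℝ) ^ (-κ)) ^ 2 * ((n : ℝ) / 4)
        ≤ c₃ ^ 2 * ((n : ℝ) ^ (-κ)) ^ 2 * ((n / 2 : ℕ) : ℝ) := by
      apply mul_le_mul_of_nonneg_left ?_ h0
      linarith
    have step2 : c₃ ^ 2 * ((n : ℝ) ^ (-κ)) ^ 2 * ((n : ℝ) / 4) = c₃ ^ 2 * R / 4 := by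
      rw [← hy2n]
      ring
    rw [ht2]
    nlinarith [step1, step2]
  have hR24 : 24 / c₃ ^ 2 ≤ R := by
    have h1 : (24 / c₃ ^ 2) ^ (1 - 2 * κ)⁻¹ ≤ (n : ℝ) := le_trans (le_max_left _ _) hnN₀
    calc 24 / c₃ ^ 2 = ((24 / c₃ ^ 2) ^ (1 - 2 * κ)⁻¹) ^ (1 - 2 * κ) :=
          (Real.rpow_inv_rpow (by positivity) h12.ne').symm
      _ ≤ (n : ℝ) ^ (1 - 2 * κ) :=
          Real.rpow_le_rpow (Real.rpow_nonneg (by positivity) _) h1 h12.le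
      _ = R := hR.symm
  have hx1 : (1 : ℝ) ≤ c₃ ^ 2 * R / 24 := by
    have hc2 : (0 : ℝ) < c₃ ^ 2 := by positivity
    rw [div_le_iff₀ hc2] at hR24
    linarith
  have hexp2 : 2 ≤ Real.exp (c₃ ^ 2 * R / 24) :=
    le_trans (by linarith) (Real.add_one_le_exp _)
  have hA2 : e₀ ≤ Real.exp (-(c₃ ^ 2 * R / 12)) := by
    rw [he₀]
    exact Real.exp_le_exp.mpr (by linarith)
  have hfin : 2 * e₀ ≤ Real.exp (-(c₃ ^ 2 / 24) * R) := by
    have e1 : Real.exp (-(c₃ ^ 2 * R / 12)) = Real.exp (-(c₃ ^ 2 / 24) * R)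
        * Real.exp (-(c₃ ^ 2 * R / 24)) := by
      rw [← Real.exp_add]
      congr 1
      ring
    have h3 : Real.exp (-(c₃ ^ 2 * R / 24)) * Real.exp (c₃ ^ 2 * R / 24) = 1 := by
      rw [← Real.exp_add]
      simp
    have e2 : Real.exp (-(c₃ ^ 2 * R / 24)) ≤ 1 / 2 := by
      have h5 : 2 * Real.exp (-(c₃ ^ 2 * R / 24))
          ≤ Real.exp (c₃ ^ 2 * R / 24) * Real.exp (-(c₃ ^ 2 * R / 24)) :=
        mul_le_mul_of_nonneg_right hexp2 (Real.exp_pos _).le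
      linarith [h3, h5]
    calc 2 * e₀ ≤ 2 * Real.exp (-(c₃ ^ 2 * R / 12)) := by linarith [hA2]
      _ = Real.exp (-(c₃ ^ 2 / 24) * R) * (2 * Real.exp (-(c₃ ^ 2 * R / 24))) := by
          rw [e1]
          ring
      _ ≤ Real.exp (-(c₃ ^ 2 / 24) * R) * 1 := by
          apply mul_le_mul_of_nonneg_left ?_ (Real.exp_pos _).le
          linarith
      _ = Real.exp (-(c₃ ^ 2 / 24) * R) := mul_one _
  calc (p : ℝ) * (2 * e₀) ≤ (p : ℝ) * Real.exp (-(c₃ ^ 2 / 24) * R) :=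
        mul_le_mul_of_nonneg_left hfin (Nat.cast_nonneg p)
    _ = (p : ℝ) * Real.exp (-(c₃ ^ 2 / 24) * (n : ℝ) ^ (1 - 2 * κ)) := by rw [hR]
end

section
/- Let (X_i, Y_i), i = 1,…,n, be i.i.d. random elements with X_i = (X_{i1},…,X_{ip}) ∈ ℝ^p and Y_i ∈ ℝ, and for each k = 1,…,p let ω_k = (1/(n(n−1))) Σ_{i≠l} I(X_{ik}<X_{lk}) I(Y_i<Y_l) − 1/4. Let M* ⊆ {1,…,p}, let κ ∈ (0,1/2) and c₂ > 0, and suppose min_{k∈M*} |E(ω_k)| > c₂ n^{−κ}. Let γₙ = c₅ n^{−κ} with 0 < c₅ ≤ c₂/2, and define the selected set M̂_{γₙ} = {1 ≤ k ≤ p : |ω_k| > γₙ}. Then there exists a constant c₄ > 0, depending only on c₅, such that for all n ≥ 2: P( M* ⊆ M̂_{γₙ} ) ≥ 1 − 2·|M*|·exp(−c₄ n^{1−2κ}). -/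
open MeasureTheory ProbabilityTheory Finset

namespace SureScreenAux

open Real

variable {Ω : Type} [MeasurableSpace Ω] {P : Measure Ω} [IsProbabilityMeasure P]

lemma integrable_of_abs_le {f : Ω → ℝ} (hf : Measurable f) {C : ℝ} (h : ∀ a, |f a| ≤ C) :
    Integrable f P := by
  refine ⟨hf.aestronglyMeasurable, ?_⟩
  apply MeasureTheory.HasFiniteIntegral.of_bounded (C := C)
  filter_upwards with a
  simpa [Real.norm_eq_abs] using h a


lemma card_perm_fixing {n : ℕ} {a b : Fin n} (hab : a ≠ b) :
    (univ.filter fun σ : Equiv.Perm (Fin n) => σ a = a ∧ σ b = b).card = (n - 2).factorial := by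
  classical
  rw [← Fintype.card_subtype]
  have e1 : {σ : Equiv.Perm (Fin n) // σ a = a ∧ σ b = b} ≃
      {f : Equiv.Perm (Fin n) // ∀ x, ¬¬(x = a ∨ x = b) → f x = x} := by
    apply Equiv.subtypeEquivRight
    intro f
    constructor
    · rintro ⟨h1, h2⟩ x hx
      rcases not_not.mp hx with rfl | rfl <;> assumption
    · intro h
      exact ⟨h a (by simp), h b (by simp)⟩
  rw [Fintype.card_congr (e1.trans (Equiv.Perm.subtypeEquivSubtypePerm
    (fun x : Fin n => ¬(x = a ∨ x = b))).symm)]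
  rw [Fintype.card_perm]
  congr 1
  have : Fintype.card {x : Fin n // x = a ∨ x = b} = 2 := by
    rw [Fintype.card_subtype]
    have : (univ.filter fun x : Fin n => x = a ∨ x = b) = {a, b} := by
      ext x; simp [or_comm]
    rw [this, card_insert_of_notMem (by simpa using hab), card_singleton]
  have h2 := Fintype.card_subtype_compl (fun x : Fin n => x = a ∨ x = b)
  rw [this, Fintype.card_fin] at h2
  exact h2


lemma card_perm_fiber {n : ℕ} {a b i l : Fin n} (hab : a ≠ b) (hil : i ≠ l) :
    (univ.filter fun σ : Equiv.Perm (Fin n) => σ a = i ∧ σ b = l).card = (n - 2).factorial := by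
  classical
  set τ : Equiv.Perm (Fin n) := Equiv.swap a i with hτ
  have hτb : τ b ≠ i := by
    intro h
    have : b = τ i := by
      have := congrArg τ.symm h
      simpa [Equiv.symm_apply_apply, hτ, Equiv.symm_swap] using this
    rw [hτ, Equiv.swap_apply_right] at this
    exact hab this.symm
  set σ₀ : Equiv.Perm (Fin n) := (Equiv.swap (τ b) l) * τ with hσ₀
  have hσ₀a : σ₀ a = i := by
    simp only [hσ₀, Equiv.Perm.mul_apply]
    rw [hτ, Equiv.swap_apply_left, Equiv.swap_apply_of_ne_of_ne (Ne.symm hτb) hil]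
  have hσ₀b : σ₀ b = l := by
    simp only [hσ₀, Equiv.Perm.mul_apply, Equiv.swap_apply_left]
  rw [← card_perm_fixing hab]
  apply Finset.card_bij' (fun σ _ => σ₀⁻¹ * σ) (fun σ _ => σ₀ * σ)
  · intro σ hσ
    simp only [mem_filter, mem_univ, true_and] at hσ ⊢
    constructor
    · rw [Equiv.Perm.mul_apply, hσ.1, ← hσ₀a, Equiv.Perm.inv_def, Equiv.symm_apply_apply]
    · rw [Equiv.Perm.mul_apply, hσ.2, ← hσ₀b, Equiv.Perm.inv_def, Equiv.symm_apply_apply]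
  · intro σ hσ
    simp only [mem_filter, mem_univ, true_and] at hσ ⊢
    constructor
    · rw [Equiv.Perm.mul_apply, hσ.1, hσ₀a]
    · rw [Equiv.Perm.mul_apply, hσ.2, hσ₀b]
  · intro σ _; group
  · intro σ _; group


lemma sum_perm_pair {n : ℕ} {a b : Fin n} (hab : a ≠ b) (f : Fin n → Fin n → ℝ) :
    ∑ σ : Equiv.Perm (Fin n), f (σ a) (σ b)
      = ((n - 2).factorial : ℝ) *
        ∑ q ∈ (univ : Finset (Fin n × Fin n)).filter (fun q => q.1 ≠ q.2), f q.1 q.2 := by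
  classical
  rw [← Finset.sum_fiberwise_of_maps_to (g := fun σ : Equiv.Perm (Fin n) => (σ a, σ b))
    (t := (univ : Finset (Fin n × Fin n)).filter (fun q => q.1 ≠ q.2))
    (fun σ _ => by simp [hab, (Equiv.injective σ).ne_iff]) (fun σ => f (σ a) (σ b))]
  rw [Finset.mul_sum]
  apply Finset.sum_congr rfl
  intro q hq
  simp only [mem_filter, mem_univ, true_and] at hq
  have : ∀ σ ∈ univ.filter (fun σ : Equiv.Perm (Fin n) => (σ a, σ b) = q),
      f (σ a) (σ b) = f q.1 q.2 := by
    intro σ hσ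
    simp only [mem_filter, Prod.ext_iff] at hσ
    rw [hσ.2.1, hσ.2.2]
  rw [Finset.sum_congr rfl this, Finset.sum_const, nsmul_eq_mul]
  congr 1
  have : (univ.filter (fun σ : Equiv.Perm (Fin n) => (σ a, σ b) = q))
      = (univ.filter (fun σ : Equiv.Perm (Fin n) => σ a = q.1 ∧ σ b = q.2)) := by
    apply Finset.filter_congr; intro σ _; simp [Prod.ext_iff]
  rw [this]
  exact_mod_cast card_perm_fiber hab hq


lemma integral_prod_pairs {E : Type*} [MeasurableSpace E] {n : ℕ}
    {Z : Fin n → Ω → E} (hZ : ∀ i, Measurable (Z i))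
    (hindep : iIndepFun Z P)
    {m : ℕ} (e o : Fin m → Fin n)
    (hdisj : ∀ j j' : Fin m, j ≠ j' →
      e j ≠ e j' ∧ e j ≠ o j' ∧ o j ≠ e j' ∧ o j ≠ o j')
    (φ : Fin m → E × E → ℝ) (hφ : ∀ j, Measurable (φ j))
    {C : ℝ} (hbd : ∀ j x, |φ j x| ≤ C)
    (s : Finset (Fin m)) :
    ∫ a, ∏ j ∈ s, φ j (Z (e j) a, Z (o j) a) ∂P
      = ∏ j ∈ s, ∫ a, φ j (Z (e j) a, Z (o j) a) ∂P := by
  classical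
  induction s using Finset.induction_on with
  | empty => simp
  | insert j₀ s hj₀ ih =>
    have hmeas : ∀ j, Measurable (fun a => φ j (Z (e j) a, Z (o j) a)) :=
      fun j => (hφ j).comp ((hZ (e j)).prodMk (hZ (o j)))
    have hmeasprod : Measurable (fun a => ∏ j ∈ s, φ j (Z (e j) a, Z (o j) a)) :=
      Finset.measurable_prod _ (fun j _ => hmeas j)
    have hbdprod : ∀ a, |∏ j ∈ s, φ j (Z (e j) a, Z (o j) a)| ≤ C ^ s.card := by
      intro a
      rw [Finset.abs_prod]
      calc ∏ j ∈ s, |φ j (Z (e j) a, Z (o j) a)| ≤ ∏ j ∈ s, C :=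
            Finset.prod_le_prod (fun j _ => abs_nonneg _) (fun j _ => hbd j _)
        _ = C ^ s.card := by rw [Finset.prod_const]
    -- independence of the partial product and the new factor
    set S : Finset (Fin n) := s.biUnion (fun j => {e j, o j}) with hS
    set T : Finset (Fin n) := {e j₀, o j₀} with hT
    have hST : Disjoint S T := by
      rw [Finset.disjoint_left]
      intro x hxS hxT
      simp only [hS, Finset.mem_biUnion, Finset.mem_insert, Finset.mem_singleton] at hxS
      simp only [hT, Finset.mem_insert, Finset.mem_singleton] at hxT
      obtain ⟨j, hj, hx⟩ := hxS
      have hne : j ≠ j₀ := fun h => hj₀ (h ▸ hj)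
      obtain ⟨h1, h2, h3, h4⟩ := hdisj j j₀ hne
      rcases hx with rfl | rfl <;> rcases hxT with h | h <;> simp_all
    have base := hindep.indepFun_finset S T hST hZ
    have heS : ∀ j ∈ s, e j ∈ S := fun j hj => by
      simp only [hS, Finset.mem_biUnion]; exact ⟨j, hj, by simp⟩
    have hoS : ∀ j ∈ s, o j ∈ S := fun j hj => by
      simp only [hS, Finset.mem_biUnion]; exact ⟨j, hj, by simp⟩
    set G : (∀ i : S, E) → ℝ :=
      fun v => ∏ j ∈ s.attach, φ j (v ⟨e j, heS j j.2⟩, v ⟨o j, hoS j j.2⟩) with hG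
    set H : (∀ i : T, E) → ℝ :=
      fun v => φ j₀ (v ⟨e j₀, by simp [hT]⟩, v ⟨o j₀, by simp [hT]⟩) with hH
    have hGmeas : Measurable G := by
      apply Finset.measurable_prod
      intro j _
      exact (hφ j).comp ((measurable_pi_apply _).prodMk (measurable_pi_apply _))
    have hHmeas : Measurable H :=
      (hφ j₀).comp ((measurable_pi_apply _).prodMk (measurable_pi_apply _))
    have hIF : IndepFun (fun a => ∏ j ∈ s, φ j (Z (e j) a, Z (o j) a))
        (fun a => φ j₀ (Z (e j₀) a, Z (o j₀) a)) P := by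
      have h2 := base.comp hGmeas hHmeas
      have hfun : (fun a => ∏ j ∈ s, φ j (Z (e j) a, Z (o j) a))
          = G ∘ (fun a (i : S) => Z i a) := by
        funext a
        exact (Finset.prod_attach s (fun j => φ j (Z (e j) a, Z (o j) a))).symm
      rw [hfun]
      exact h2
    simp only [Finset.prod_insert hj₀]
    have hint1 : Integrable (fun a => ∏ j ∈ s, φ j (Z (e j) a, Z (o j) a)) P :=
      integrable_of_abs_le hmeasprod hbdprod
    have hint2 : Integrable (fun a => φ j₀ (Z (e j₀) a, Z (o j₀) a)) P :=
      integrable_of_abs_le (hmeas j₀) (fun a => hbd j₀ _)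
    have := hIF.symm.integral_mul_eq_mul_integral hint2.aestronglyMeasurable hint1.aestronglyMeasurable
    calc ∫ a, φ j₀ (Z (e j₀) a, Z (o j₀) a) * ∏ j ∈ s, φ j (Z (e j) a, Z (o j) a) ∂P
        = (∫ a, φ j₀ (Z (e j₀) a, Z (o j₀) a) ∂P) *
            ∫ a, ∏ j ∈ s, φ j (Z (e j) a, Z (o j) a) ∂P := this
      _ = (∫ a, φ j₀ (Z (e j₀) a, Z (o j₀) a) ∂P) *
            ∏ j ∈ s, ∫ a, φ j (Z (e j) a, Z (o j) a) ∂P := by rw [ih]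


lemma exp_moment_bound {G : Ω → ℝ} (hG : Measurable G) (hbd : ∀ a, |G a| ≤ 1)
    (hmean : ∫ a, G a ∂P = 0) {s : ℝ} (hs : |s| ≤ 1) :
    ∫ a, Real.exp (s * G a) ∂P ≤ Real.exp (3 / 4 * s ^ 2) := by
  have habs : ∀ a, |s * G a| ≤ 1 := by
    intro a
    rw [abs_mul]
    calc |s| * |G a| ≤ 1 * 1 := mul_le_mul hs (hbd a) (abs_nonneg _) zero_le_one
      _ = 1 := one_mul 1
  have hpt : ∀ a, Real.exp (s * G a) ≤ 1 + s * G a + 3 / 4 * s ^ 2 := by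
    intro a
    have h := Real.exp_bound (habs a) (n := 2) (by norm_num)
    have hsum : ∑ m ∈ range 2, (s * G a) ^ m / m.factorial = 1 + s * G a := by
      simp [Finset.sum_range_succ]
    rw [hsum] at h
    have h2 : Real.exp (s * G a) - (1 + s * G a) ≤ |s * G a| ^ 2 * (3 / 4) := by
      calc Real.exp (s * G a) - (1 + s * G a) ≤ |Real.exp (s * G a) - (1 + s * G a)| :=
            le_abs_self _
        _ ≤ |s * G a| ^ 2 * ((2 : ℕ).succ / ((2 : ℕ).factorial * 2)) := h
        _ = |s * G a| ^ 2 * (3 / 4) := by norm_num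
    have h3 : |s * G a| ^ 2 * (3 / 4) ≤ 3 / 4 * s ^ 2 := by
      rw [abs_mul, mul_pow]
      have h4 : |G a| ^ 2 ≤ 1 := by nlinarith [hbd a, abs_nonneg (G a)]
      nlinarith [sq_abs s, sq_nonneg s]
    linarith
  have hGint : Integrable G P := integrable_of_abs_le hG hbd
  have hint1 : Integrable (fun a => Real.exp (s * G a)) P := by
    apply integrable_of_abs_le (by fun_prop)
    intro a
    rw [abs_of_nonneg (Real.exp_nonneg _)]
    exact Real.exp_le_exp.2 ((le_abs_self _).trans (habs a)) |>.trans (le_refl _) |>.trans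
      (Real.exp_le_exp.2 le_rfl)
  have hint2 : Integrable (fun a => 1 + s * G a + 3 / 4 * s ^ 2) P :=
    ((integrable_const (1 : ℝ)).add (hGint.const_mul s)).add (integrable_const _)
  calc ∫ a, Real.exp (s * G a) ∂P ≤ ∫ a, (1 + s * G a + 3 / 4 * s ^ 2) ∂P :=
        integral_mono hint1 hint2 hpt
    _ = 1 + 3 / 4 * s ^ 2 := by
        have e1 : ∫ a, (1 + s * G a + 3 / 4 * s ^ 2) ∂P
            = (∫ a, (1 + s * G a) ∂P) + ∫ _a, (3 / 4 * s ^ 2 : ℝ) ∂P :=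
          integral_add ((integrable_const (1 : ℝ)).add (hGint.const_mul s)) (integrable_const _)
        have e2 : ∫ a, (1 + s * G a) ∂P = (∫ _a, (1:ℝ) ∂P) + ∫ a, s * G a ∂P :=
          integral_add (integrable_const (1 : ℝ)) (hGint.const_mul s)
        rw [e1, e2, MeasureTheory.integral_const_mul, hmean, integral_const, integral_const]
        simp
    _ ≤ Real.exp (3 / 4 * s ^ 2) := by
        have := Real.add_one_le_exp (3 / 4 * s ^ 2)
        linarith

/-- Equality of integrals of a function of a pair, for pairs of distinct indices,
for i.i.d. random variables. -/

lemma pair_integral_eq {E : Type*} [MeasurableSpace E] {n : ℕ}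
    {Z : Fin n → Ω → E} (hZ : ∀ i, Measurable (Z i))
    (hindep : iIndepFun Z P)
    (hident : ∀ i l, P.map (Z i) = P.map (Z l))
    {F : E × E → ℝ} (hF : Measurable F)
    {i l i' l' : Fin n} (hil : i ≠ l) (hil' : i' ≠ l') :
    ∫ a, F (Z i a, Z l a) ∂P = ∫ a, F (Z i' a, Z l' a) ∂P := by
  have key : ∀ {u v : Fin n}, u ≠ v →
      P.map (fun a => (Z u a, Z v a)) = (P.map (Z i)).prod (P.map (Z l)) := by
    intro u v huv
    have h1 : IndepFun (Z u) (Z v) P := hindep.indepFun huv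
    rw [(indepFun_iff_map_prod_eq_prod_map_map (hZ u).aemeasurable (hZ v).aemeasurable).1 h1,
      hident u i, hident v l]
  have h1 : ∫ a, F (Z i a, Z l a) ∂P = ∫ x, F x ∂(P.map (fun a => (Z i a, Z l a))) := by
    rw [integral_map ((hZ i).prodMk (hZ l)).aemeasurable hF.aestronglyMeasurable]
  have h2 : ∫ a, F (Z i' a, Z l' a) ∂P = ∫ x, F x ∂(P.map (fun a => (Z i' a, Z l' a))) := by
    rw [integral_map ((hZ i').prodMk (hZ l')).aemeasurable hF.aestronglyMeasurable]
  rw [h1, h2, key hil, key hil']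


set_option maxHeartbeats 1000000 in
lemma tail_bound {E : Type*} [MeasurableSpace E] {n : ℕ} (hn : 2 ≤ n)
    {Z : Fin n → Ω → E} (hZ : ∀ i, Measurable (Z i))
    (hindep : iIndepFun Z P)
    (hident : ∀ i l, P.map (Z i) = P.map (Z l))
    {h : E × E → ℝ} (hh : Measurable h) (h0 : ∀ z, 0 ≤ h z) (h1 : ∀ z, h z ≤ 1)
    {Wk : Ω → ℝ}
    (hWk : ∀ a, Wk a = (1 / ((n : ℝ) * ((n : ℝ) - 1))) *
        ∑ q ∈ (univ : Finset (Fin n × Fin n)).filter (fun q => q.1 ≠ q.2),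
          h (Z q.1 a, Z q.2 a) - 1 / 4)
    {t : ℝ} (ht : 0 < t) :
    (P {a | t ≤ Wk a - ∫ b, Wk b ∂P}).toReal ≤ Real.exp (-(1 / 12) * (n : ℝ) * t ^ 2) ∧
    (P {a | t ≤ (∫ b, Wk b ∂P) - Wk a}).toReal ≤ Real.exp (-(1 / 12) * (n : ℝ) * t ^ 2) := by
  classical
  have hN2 : (2 : ℝ) ≤ (n : ℝ) := by exact_mod_cast hn
  have hN0 : (0 : ℝ) < n := by linarith
  have hN1 : (0 : ℝ) < (n : ℝ) - 1 := by linarith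
  set N : ℝ := (n : ℝ) with hNdef
  set c : ℝ := 1 / (N * (N - 1)) with hc
  have hcpos : 0 < c := by rw [hc]; positivity
  set D : Finset (Fin n × Fin n) := univ.filter (fun q => q.1 ≠ q.2) with hDdef
  have hDcard : (D.card : ℝ) = N * (N - 1) := by
    have hoff : D = (univ : Finset (Fin n)).offDiag := by
      ext q; simp [hDdef, Finset.mem_offDiag]
    rw [hoff, Finset.offDiag_card, card_univ, Fintype.card_fin]
    have hnn : n ≤ n * n := Nat.le_mul_of_pos_left n (by omega)
    push_cast [Nat.cast_sub hnn]
    ring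
  have hcD : c * D.card = 1 := by
    rw [hDcard, hc]; field_simp
  -- indices for pairing
  set m : ℕ := n / 2 with hmdef
  have hm1 : 1 ≤ m := by omega
  have hm2 : 2 * m ≤ n := by omega
  have hmpos : (0 : ℝ) < m := by exact_mod_cast hm1
  have hm4 : N ≤ 4 * m := by
    have : n ≤ 4 * m := by omega
    rw [hNdef]; exact_mod_cast this
  set e : Fin m → Fin n := fun j => ⟨2 * j.1, by have := j.isLt; omega⟩ with hedef
  set o : Fin m → Fin n := fun j => ⟨2 * j.1 + 1, by have := j.isLt; omega⟩ with hodef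
  have heo : ∀ j : Fin m, e j ≠ o j := by
    intro j; simp [hedef, hodef, Fin.ext_iff]
  have hdisj : ∀ j j' : Fin m, j ≠ j' →
      e j ≠ e j' ∧ e j ≠ o j' ∧ o j ≠ e j' ∧ o j ≠ o j' := by
    intro j j' hjj'
    have : j.1 ≠ j'.1 := fun hv => hjj' (Fin.ext hv)
    refine ⟨?_, ?_, ?_, ?_⟩ <;> simp [hedef, hodef, Fin.ext_iff] <;> omega
  -- centered kernel
  set μh : ℝ := ∫ a, h (Z ⟨0, by omega⟩ a, Z ⟨1, by omega⟩ a) ∂P with hμdef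
  have hhZmeas : ∀ i l : Fin n, Measurable (fun a => h (Z i a, Z l a)) :=
    fun i l => hh.comp ((hZ i).prodMk (hZ l))
  have hhZint : ∀ i l : Fin n, Integrable (fun a => h (Z i a, Z l a)) P := by
    intro i l
    apply integrable_of_abs_le (hhZmeas i l) (C := 1)
    intro a; rw [abs_le]; exact ⟨by linarith [h0 (Z i a, Z l a)], h1 _⟩
  have hμ0 : 0 ≤ μh := integral_nonneg (fun a => h0 _)
  have hμ1 : μh ≤ 1 := by
    rw [hμdef]
    calc ∫ a, h (Z ⟨0, by omega⟩ a, Z ⟨1, by omega⟩ a) ∂P ≤ ∫ _a, (1 : ℝ) ∂P :=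
          integral_mono (hhZint _ _) (integrable_const _) (fun a => h1 _)
      _ = 1 := by simp
  have hpair : ∀ i l : Fin n, i ≠ l → ∫ a, h (Z i a, Z l a) ∂P = μh := by
    intro i l hil
    exact pair_integral_eq hZ hindep hident hh hil (by simp [Fin.ext_iff])
  set g : E × E → ℝ := fun z => h z - μh with hgdef
  have hgmeas : Measurable g := hh.sub measurable_const
  have hgbd : ∀ z, |g z| ≤ 1 := by
    intro z; rw [hgdef, abs_le]
    constructor <;> simp only <;> [linarith [h0 z]; linarith [h1 z]]
  have hgZmeas : ∀ i l : Fin n, Measurable (fun a => g (Z i a, Z l a)) :=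
    fun i l => hgmeas.comp ((hZ i).prodMk (hZ l))
  have hgZint : ∀ i l : Fin n, Integrable (fun a => g (Z i a, Z l a)) P :=
    fun i l => integrable_of_abs_le (hgZmeas i l) (fun a => hgbd _)
  have hgmean : ∀ i l : Fin n, i ≠ l → ∫ a, g (Z i a, Z l a) ∂P = 0 := by
    intro i l hil
    rw [hgdef]
    simp only
    rw [integral_sub (hhZint i l) (integrable_const _), hpair i l hil, integral_const]
    simp
  -- expectation of Wk
  have hWmeas : Measurable Wk := by
    have : Wk = fun a => c * ∑ q ∈ D, h (Z q.1 a, Z q.2 a) - 1 / 4 := funext hWk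
    rw [this]
    exact ((measurable_const.mul (Finset.measurable_sum D
      (fun q _ => hhZmeas q.1 q.2))).sub measurable_const)
  have hWint : Integrable Wk P := by
    apply integrable_of_abs_le hWmeas (C := 1)
    intro a
    rw [hWk a, abs_le]
    have hsum0 : 0 ≤ ∑ q ∈ D, h (Z q.1 a, Z q.2 a) :=
      Finset.sum_nonneg (fun q _ => h0 _)
    have hsum1 : ∑ q ∈ D, h (Z q.1 a, Z q.2 a) ≤ D.card := by
      calc ∑ q ∈ D, h (Z q.1 a, Z q.2 a) ≤ ∑ _q ∈ D, (1 : ℝ) :=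
            Finset.sum_le_sum (fun q _ => h1 _)
        _ = D.card := by simp
    have h5 : c * ∑ q ∈ D, h (Z q.1 a, Z q.2 a) ≤ 1 := by
      calc c * ∑ q ∈ D, h (Z q.1 a, Z q.2 a) ≤ c * D.card := by
            exact mul_le_mul_of_nonneg_left hsum1 hcpos.le
        _ = 1 := hcD
    constructor
    · nlinarith
    · nlinarith
  have hEW : ∫ b, Wk b ∂P = μh - 1 / 4 := by
    have h6 : (fun a => Wk a) = fun a => c * ∑ q ∈ D, h (Z q.1 a, Z q.2 a) - 1 / 4 :=
      funext hWk
    rw [h6]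
    have hint : Integrable (fun a => ∑ q ∈ D, h (Z q.1 a, Z q.2 a)) P :=
      integrable_finset_sum D (fun q _ => hhZint q.1 q.2)
    rw [integral_sub ((hint.const_mul c)) (integrable_const _), integral_const,
      MeasureTheory.integral_const_mul, integral_finset_sum D (fun q _ => hhZint q.1 q.2)]
    have h7 : ∀ q ∈ D, ∫ a, h (Z q.1 a, Z q.2 a) ∂P = μh := by
      intro q hq
      simp only [hDdef, mem_filter] at hq
      exact hpair q.1 q.2 hq.2
    rw [Finset.sum_congr rfl h7, Finset.sum_const, nsmul_eq_mul, ← mul_assoc, hcD]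
    simp
  set EW : ℝ := ∫ b, Wk b ∂P with hEWdef
  set U : Ω → ℝ := fun a => Wk a - EW with hUdef
  have hUmeas : Measurable U := hWmeas.sub measurable_const
  have hUg : ∀ a, U a = c * ∑ q ∈ D, g (Z q.1 a, Z q.2 a) := by
    intro a
    rw [hUdef]
    simp only
    rw [hWk a, hEW, hgdef]
    simp only [Finset.sum_sub_distrib, Finset.sum_const, nsmul_eq_mul, mul_sub, ← mul_assoc, hcD]
    ring
  have hUbd : ∀ a, |U a| ≤ 1 := by
    intro a
    rw [hUg a, abs_mul, abs_of_pos hcpos]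
    calc c * |∑ q ∈ D, g (Z q.1 a, Z q.2 a)| ≤ c * D.card := by
          apply mul_le_mul_of_nonneg_left _ hcpos.le
          calc |∑ q ∈ D, g (Z q.1 a, Z q.2 a)| ≤ ∑ q ∈ D, |g (Z q.1 a, Z q.2 a)| :=
                Finset.abs_sum_le_sum_abs _ _
            _ ≤ ∑ _q ∈ D, (1 : ℝ) := Finset.sum_le_sum (fun q _ => hgbd _)
            _ = D.card := by simp
      _ = 1 := hcD
  -- the permutation average
  set V : Equiv.Perm (Fin n) → Ω → ℝ :=
    fun σ a => (m : ℝ)⁻¹ * ∑ j : Fin m, g (Z (σ (e j)) a, Z (σ (o j)) a) with hVdef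
  have hVmeas : ∀ σ, Measurable (V σ) :=
    fun σ => measurable_const.mul (Finset.measurable_sum _ (fun j _ => hgZmeas _ _))
  have hVbd : ∀ σ a, |V σ a| ≤ 1 := by
    intro σ a
    rw [hVdef]
    simp only
    rw [abs_mul, abs_of_pos (by positivity : (0:ℝ) < (m:ℝ)⁻¹)]
    calc (m : ℝ)⁻¹ * |∑ j : Fin m, g (Z (σ (e j)) a, Z (σ (o j)) a)|
        ≤ (m : ℝ)⁻¹ * m := by
          apply mul_le_mul_of_nonneg_left _ (by positivity)
          calc |∑ j : Fin m, g (Z (σ (e j)) a, Z (σ (o j)) a)|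
              ≤ ∑ j : Fin m, |g (Z (σ (e j)) a, Z (σ (o j)) a)| := Finset.abs_sum_le_sum_abs _ _
            _ ≤ ∑ _j : Fin m, (1 : ℝ) := Finset.sum_le_sum (fun j _ => hgbd _)
            _ = m := by simp
      _ = 1 := by field_simp
  have hfact : (n.factorial : ℝ) = ((n - 2).factorial : ℝ) * (N * (N - 1)) := by
    obtain ⟨n', rfl⟩ : ∃ n', n = n' + 2 := ⟨n - 2, by omega⟩
    have : (n' + 2).factorial = (n' + 2) * ((n' + 1) * n'.factorial) := by
      rw [Nat.factorial_succ, Nat.factorial_succ]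
    rw [this]
    have h8 : n' + 2 - 2 = n' := by omega
    rw [h8, hNdef]
    push_cast
    ring
  have hVsum : ∀ a, ∑ σ : Equiv.Perm (Fin n), V σ a = (n.factorial : ℝ) * U a := by
    intro a
    have h9 : ∑ σ : Equiv.Perm (Fin n), V σ a
        = (m : ℝ)⁻¹ * ∑ σ : Equiv.Perm (Fin n), ∑ j : Fin m,
            g (Z (σ (e j)) a, Z (σ (o j)) a) := by
      rw [Finset.mul_sum]
    rw [h9, Finset.sum_comm]
    have h10 : ∀ j : Fin m, ∑ σ : Equiv.Perm (Fin n), g (Z (σ (e j)) a, Z (σ (o j)) a)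
        = ((n - 2).factorial : ℝ) * ∑ q ∈ D, g (Z q.1 a, Z q.2 a) := by
      intro j
      exact sum_perm_pair (heo j) (fun i l => g (Z i a, Z l a))
    rw [Finset.sum_congr rfl (fun j _ => h10 j), Finset.sum_const, card_univ, Fintype.card_fin,
      nsmul_eq_mul, hUg a, hfact, hc, one_div,
      inv_mul_cancel_left₀ (ne_of_gt hmpos), mul_assoc,
      mul_inv_cancel_left₀ (mul_pos hN0 hN1).ne']
  -- the mgf bound
  have hexpint : ∀ (θ : ℝ) (F : Ω → ℝ), Measurable F → (∀ a, |F a| ≤ 1) →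
      Integrable (fun a => Real.exp (θ * F a)) P := by
    intro θ F hF hbd
    apply integrable_of_abs_le (by fun_prop) (C := Real.exp |θ|)
    intro a
    rw [abs_of_pos (Real.exp_pos _), Real.exp_le_exp]
    calc θ * F a ≤ |θ * F a| := le_abs_self _
      _ = |θ| * |F a| := abs_mul _ _
      _ ≤ |θ| * 1 := mul_le_mul_of_nonneg_left (hbd a) (abs_nonneg _)
      _ = |θ| := mul_one _
  have mgf_bound : ∀ θ : ℝ, |θ| ≤ (m : ℝ) →
      ∫ a, Real.exp (θ * U a) ∂P ≤ Real.exp (3 / 4 * θ ^ 2 / m) := by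
    intro θ hθ
    have hsm : |θ / m| ≤ 1 := by
      rw [abs_div, abs_of_pos hmpos, div_le_one hmpos]
      exact hθ
    -- Jensen pointwise
    have hjensen : ∀ a, Real.exp (θ * U a)
        ≤ ∑ σ : Equiv.Perm (Fin n), (n.factorial : ℝ)⁻¹ * Real.exp (θ * V σ a) := by
      intro a
      have hcard : ∑ _σ : Equiv.Perm (Fin n), (n.factorial : ℝ)⁻¹ = 1 := by
        rw [Finset.sum_const, card_univ, Fintype.card_perm, Fintype.card_fin, nsmul_eq_mul]
        field_simp
      have hconv := convexOn_exp.map_sum_le (t := (univ : Finset (Equiv.Perm (Fin n))))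
        (w := fun _ => (n.factorial : ℝ)⁻¹) (p := fun σ => θ * V σ a)
        (fun _ _ => by positivity) hcard (fun _ _ => Set.mem_univ _)
      have harg : ∑ σ : Equiv.Perm (Fin n), (n.factorial : ℝ)⁻¹ • (θ * V σ a) = θ * U a := by
        simp only [smul_eq_mul]
        rw [← Finset.mul_sum, ← Finset.mul_sum, hVsum a]
        have : (n.factorial : ℝ) ≠ 0 := by positivity
        field_simp
      rw [harg] at hconv
      calc Real.exp (θ * U a) ≤ ∑ σ : Equiv.Perm (Fin n),
            (n.factorial : ℝ)⁻¹ • Real.exp (θ * V σ a) := hconv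
        _ = ∑ σ : Equiv.Perm (Fin n), (n.factorial : ℝ)⁻¹ * Real.exp (θ * V σ a) := by
            simp [smul_eq_mul]
    -- per-permutation bound
    have hperσ : ∀ σ : Equiv.Perm (Fin n),
        ∫ a, Real.exp (θ * V σ a) ∂P ≤ Real.exp (3 / 4 * θ ^ 2 / m) := by
      intro σ
      have hprod : ∀ a, Real.exp (θ * V σ a)
          = ∏ j : Fin m, Real.exp ((θ / m) * g (Z (σ (e j)) a, Z (σ (o j)) a)) := by
        intro a
        rw [← Real.exp_sum]
        congr 1
        rw [hVdef]
        simp only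
        rw [Finset.mul_sum, Finset.mul_sum]
        exact Finset.sum_congr rfl fun j _ => by ring
      have hdisj' : ∀ j j' : Fin m, j ≠ j' →
          σ (e j) ≠ σ (e j') ∧ σ (e j) ≠ σ (o j') ∧ σ (o j) ≠ σ (e j') ∧
            σ (o j) ≠ σ (o j') := by
        intro j j' hjj'
        obtain ⟨a1, a2, a3, a4⟩ := hdisj j j' hjj'
        exact ⟨fun hx => a1 (σ.injective hx), fun hx => a2 (σ.injective hx),
          fun hx => a3 (σ.injective hx), fun hx => a4 (σ.injective hx)⟩
      have hfac := integral_prod_pairs hZ hindep (fun j => σ (e j)) (fun j => σ (o j)) hdisj'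
        (fun _ z => Real.exp ((θ / m) * g z))
        (fun j => by fun_prop)
        (C := Real.exp 1)
        (by
          intro j x
          rw [abs_of_pos (Real.exp_pos _), Real.exp_le_exp]
          calc (θ / m) * g x ≤ |(θ / m) * g x| := le_abs_self _
            _ = |θ / m| * |g x| := abs_mul _ _
            _ ≤ 1 * 1 := mul_le_mul hsm (hgbd x) (abs_nonneg _) zero_le_one
            _ = 1 := one_mul 1)
        univ
      have hstep : ∫ a, Real.exp (θ * V σ a) ∂P
          = ∏ j : Fin m, ∫ a, Real.exp ((θ / m) * g (Z (σ (e j)) a, Z (σ (o j)) a)) ∂P := by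
        rw [← hfac]
        apply integral_congr_ae
        filter_upwards with a
        exact hprod a
      rw [hstep]
      have hterm : ∀ j : Fin m,
          ∫ a, Real.exp ((θ / m) * g (Z (σ (e j)) a, Z (σ (o j)) a)) ∂P
            ≤ Real.exp (3 / 4 * (θ / m) ^ 2) := by
        intro j
        have hne : σ (e j) ≠ σ (o j) := fun hx => heo j (σ.injective hx)
        exact exp_moment_bound (hgZmeas _ _) (fun a => hgbd _) (hgmean _ _ hne) hsm
      calc ∏ j : Fin m, ∫ a, Real.exp ((θ / m) * g (Z (σ (e j)) a, Z (σ (o j)) a)) ∂P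
          ≤ ∏ _j : Fin m, Real.exp (3 / 4 * (θ / m) ^ 2) := by
            apply Finset.prod_le_prod
            · intro j _
              exact integral_nonneg (fun a => (Real.exp_pos _).le)
            · intro j _
              exact hterm j
        _ = Real.exp (3 / 4 * (θ / m) ^ 2) ^ m := by
            rw [Finset.prod_const, card_univ, Fintype.card_fin]
        _ = Real.exp ((m : ℝ) * (3 / 4 * (θ / m) ^ 2)) := by
            rw [← Real.exp_nat_mul]
        _ = Real.exp (3 / 4 * θ ^ 2 / m) := by
            congr 1
            field_simp
    -- integrate Jensen
    have hintL : Integrable (fun a => Real.exp (θ * U a)) P := hexpint θ U hUmeas hUbd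
    have hintV : ∀ σ, Integrable (fun a => Real.exp (θ * V σ a)) P :=
      fun σ => hexpint θ (V σ) (hVmeas σ) (hVbd σ)
    have hintR : Integrable (fun a => ∑ σ : Equiv.Perm (Fin n),
        (n.factorial : ℝ)⁻¹ * Real.exp (θ * V σ a)) P :=
      integrable_finset_sum _ (fun σ _ => (hintV σ).const_mul _)
    calc ∫ a, Real.exp (θ * U a) ∂P
        ≤ ∫ a, ∑ σ : Equiv.Perm (Fin n), (n.factorial : ℝ)⁻¹ * Real.exp (θ * V σ a) ∂P :=
          integral_mono hintL hintR hjensen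
      _ = ∑ σ : Equiv.Perm (Fin n), (n.factorial : ℝ)⁻¹ * ∫ a, Real.exp (θ * V σ a) ∂P := by
          rw [integral_finset_sum _ (fun σ _ => (hintV σ).const_mul _)]
          exact Finset.sum_congr rfl (fun σ _ => MeasureTheory.integral_const_mul _ _)
      _ ≤ ∑ _σ : Equiv.Perm (Fin n), (n.factorial : ℝ)⁻¹ * Real.exp (3 / 4 * θ ^ 2 / m) := by
          apply Finset.sum_le_sum
          intro σ _
          exact mul_le_mul_of_nonneg_left (hperσ σ) (by positivity)
      _ = Real.exp (3 / 4 * θ ^ 2 / m) := by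
          rw [Finset.sum_const, card_univ, Fintype.card_perm, Fintype.card_fin, nsmul_eq_mul]
          have : (n.factorial : ℝ) ≠ 0 := by positivity
          field_simp
  -- Chernoff bound
  have hbound : ∀ F : Ω → ℝ, Measurable F → (∀ a, |F a| ≤ 1) →
      (∀ θ : ℝ, |θ| ≤ (m : ℝ) → ∫ a, Real.exp (θ * F a) ∂P ≤ Real.exp (3 / 4 * θ ^ 2 / m)) →
      (P {a | t ≤ F a}).toReal ≤ Real.exp (-(1 / 12) * N * t ^ 2) := by
    intro F hF hFbd hmgf
    by_cases hT : t ≤ 1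
    · set θ : ℝ := 2 / 3 * m * t with hθdef
      have hθ0 : 0 ≤ θ := by positivity
      have hθm : |θ| ≤ (m : ℝ) := by
        rw [abs_of_nonneg hθ0, hθdef]
        nlinarith
      have hch := measure_ge_le_exp_mul_mgf (X := F) (μ := P) t hθ0 (hexpint θ F hF hFbd)
      have hmgf' : mgf F P θ ≤ Real.exp (3 / 4 * θ ^ 2 / m) := by
        rw [mgf]
        exact hmgf θ hθm
      calc (P {a | t ≤ F a}).toReal ≤ Real.exp (-θ * t) * mgf F P θ := hch
        _ ≤ Real.exp (-θ * t) * Real.exp (3 / 4 * θ ^ 2 / m) :=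
            mul_le_mul_of_nonneg_left hmgf' (Real.exp_pos _).le
        _ = Real.exp (-θ * t + 3 / 4 * θ ^ 2 / m) := (Real.exp_add _ _).symm
        _ = Real.exp (-(1 / 3) * m * t ^ 2) := by
            congr 1
            rw [hθdef]
            field_simp
            ring
        _ ≤ Real.exp (-(1 / 12) * N * t ^ 2) := by
            rw [Real.exp_le_exp]
            nlinarith [sq_nonneg t]
    · push_neg at hT
      have hempty : {a | t ≤ F a} = ∅ := by
        rw [Set.eq_empty_iff_forall_notMem]
        intro a ha
        simp only [Set.mem_setOf_eq] at ha
        have := hFbd a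
        have : F a ≤ 1 := le_of_abs_le this
        linarith
      rw [hempty]
      simp [Real.exp_nonneg]
  constructor
  · have hset : {a | t ≤ Wk a - ∫ b, Wk b ∂P} = {a | t ≤ U a} := by
      simp only [hUdef, hEWdef]
    rw [hset]
    exact hbound U hUmeas hUbd mgf_bound
  · have hset : {a | t ≤ (∫ b, Wk b ∂P) - Wk a} = {a | t ≤ (fun a => -U a) a} := by
      simp only [hUdef, hEWdef]
      ext a
      simp only [Set.mem_setOf_eq, neg_sub]
    rw [hset]
    apply hbound (fun a => -U a) hUmeas.neg (fun a => by rw [abs_neg]; exact hUbd a)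
    intro θ hθ
    have h11 : ∀ a, θ * (-U a) = (-θ) * U a := fun a => by ring
    calc ∫ a, Real.exp (θ * (-U a)) ∂P = ∫ a, Real.exp ((-θ) * U a) ∂P := by
          apply integral_congr_ae
          filter_upwards with a
          rw [h11 a]
      _ ≤ Real.exp (3 / 4 * (-θ) ^ 2 / m) := mgf_bound (-θ) (by rwa [abs_neg])
      _ = Real.exp (3 / 4 * θ ^ 2 / m) := by rw [neg_pow]; ring_nf


end SureScreenAux

set_option maxHeartbeats 1000000 in
/-- **Sure screening property of robust rank correlation screening:** if
`min_{k∈M*} |E ω_k| > c₂ n^{-κ}` and `γₙ = c₅ n^{-κ}` with `0 < c₅ ≤ c₂/2`, then there is a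
constant `c₄ > 0` depending only on `c₅` such that for all `n ≥ 2`,
`P(M* ⊆ M̂_{γₙ}) ≥ 1 - 2 |M*| exp(-c₄ n^{1-2κ})`, where
`M̂_{γₙ} = {k : |ω_k| > γₙ}`. -/
theorem sure_screening_of_rank_correlation :
    ∀ κ ∈ Set.Ioo (0 : ℝ) (1 / 2), ∀ c₂ > (0 : ℝ), ∀ c₅ : ℝ, 0 < c₅ → c₅ ≤ c₂ / 2 →
      ∃ c₄ > (0 : ℝ),
        ∀ n : ℕ, 2 ≤ n → ∀ p : ℕ,
          ∀ (Ω : Type) (_ : MeasurableSpace Ω) (P : Measure Ω),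
            IsProbabilityMeasure P →
          ∀ (X : Fin n → Ω → (Fin p → ℝ)) (Y : Fin n → Ω → ℝ),
            (∀ i, Measurable (X i)) → (∀ i, Measurable (Y i)) →
            iIndepFun (fun i ω => (X i ω, Y i ω)) P →
            (∀ i l, P.map (fun ω => (X i ω, Y i ω)) = P.map (fun ω => (X l ω, Y l ω))) →
          ∀ W : Fin p → Ω → ℝ,
            (∀ k a, W k a = (1 / ((n : ℝ) * ((n : ℝ) - 1))) *
                ∑ q ∈ (Finset.univ : Finset (Fin n × Fin n)).filter (fun q => q.1 ≠ q.2),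
                  (if X q.1 a k < X q.2 a k then (1 : ℝ) else 0) *
                    (if Y q.1 a < Y q.2 a then (1 : ℝ) else 0)
              - 1 / 4) →
          ∀ Mstar : Finset (Fin p),
            (∀ k ∈ Mstar, c₂ * (n : ℝ) ^ (-κ) < |∫ a, W k a ∂P|) →
            1 - 2 * (Mstar.card : ℝ) * Real.exp (-c₄ * (n : ℝ) ^ (1 - 2 * κ))
              ≤ (P {a | ∀ k ∈ Mstar, c₅ * (n : ℝ) ^ (-κ) < |W k a|}).toReal := by
  classical
  intro κ hκ c₂ hc₂ c₅ hc₅ hc₅c₂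
  refine ⟨c₅ ^ 2 / 12, by positivity, ?_⟩
  intro n hn p Ω mΩ P hP X Y hX hY hindep hident W hW Mstar hM
  haveI := hP
  have hN2 : (2 : ℝ) ≤ (n : ℝ) := by exact_mod_cast hn
  have hN0 : (0 : ℝ) < (n : ℝ) := by linarith
  have hrp : (0 : ℝ) < (n : ℝ) ^ (-κ) := Real.rpow_pos_of_pos hN0 _
  set t : ℝ := c₅ * (n : ℝ) ^ (-κ) with htdef
  have ht : 0 < t := mul_pos hc₅ hrp
  have hZ : ∀ i, Measurable (fun ω => (X i ω, Y i ω)) := fun i => (hX i).prodMk (hY i)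
  -- measurability of W k
  have hWmeas : ∀ k, Measurable (W k) := by
    intro k
    have : W k = fun a => (1 / ((n : ℝ) * ((n : ℝ) - 1))) *
        ∑ q ∈ (Finset.univ : Finset (Fin n × Fin n)).filter (fun q => q.1 ≠ q.2),
          (if X q.1 a k < X q.2 a k then (1 : ℝ) else 0) *
            (if Y q.1 a < Y q.2 a then (1 : ℝ) else 0) - 1 / 4 := funext (hW k)
    rw [this]
    apply Measurable.sub _ measurable_const
    apply Measurable.const_mul
    apply Finset.measurable_sum
    intro q _
    exact Measurable.mul
      (Measurable.ite (measurableSet_lt ((measurable_pi_apply k).comp (hX q.1))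
        ((measurable_pi_apply k).comp (hX q.2))) measurable_const measurable_const)
      (Measurable.ite (measurableSet_lt (hY q.1) (hY q.2)) measurable_const measurable_const)
  -- the per-coordinate tail bound
  have key : ∀ k : Fin p,
      (P {a | t ≤ W k a - ∫ b, W k b ∂P}).toReal ≤
          Real.exp (-(1 / 12) * (n : ℝ) * t ^ 2) ∧
      (P {a | t ≤ (∫ b, W k b ∂P) - W k a}).toReal ≤
          Real.exp (-(1 / 12) * (n : ℝ) * t ^ 2) := by
    intro k
    refine SureScreenAux.tail_bound hn hZ hindep hident
      (h := fun z : ((Fin p → ℝ) × ℝ) × ((Fin p → ℝ) × ℝ) =>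
        (if z.1.1 k < z.2.1 k then (1 : ℝ) else 0) * (if z.1.2 < z.2.2 then (1 : ℝ) else 0))
      ?_ ?_ ?_ ?_ ht
    · have m1 : Measurable fun z : ((Fin p → ℝ) × ℝ) × ((Fin p → ℝ) × ℝ) => z.1.1 k := by
        fun_prop
      have m2 : Measurable fun z : ((Fin p → ℝ) × ℝ) × ((Fin p → ℝ) × ℝ) => z.2.1 k := by
        fun_prop
      have m3 : Measurable fun z : ((Fin p → ℝ) × ℝ) × ((Fin p → ℝ) × ℝ) => z.1.2 := by
        fun_prop
      have m4 : Measurable fun z : ((Fin p → ℝ) × ℝ) × ((Fin p → ℝ) × ℝ) => z.2.2 := by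
        fun_prop
      exact Measurable.mul
        (Measurable.ite (measurableSet_lt m1 m2) measurable_const measurable_const)
        (Measurable.ite (measurableSet_lt m3 m4) measurable_const measurable_const)
    · intro z; split_ifs <;> norm_num
    · intro z; split_ifs <;> norm_num
    · intro a; exact hW k a
  -- rewrite the exponent
  have hexp : Real.exp (-(1 / 12) * (n : ℝ) * t ^ 2)
      = Real.exp (-(c₅ ^ 2 / 12) * (n : ℝ) ^ (1 - 2 * κ)) := by
    congr 1
    rw [htdef, mul_pow]
    have h1 : ((n : ℝ) ^ (-κ)) ^ 2 = (n : ℝ) ^ (-(2 * κ)) := by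
      rw [← Real.rpow_natCast ((n : ℝ) ^ (-κ)) 2, ← Real.rpow_mul hN0.le]
      norm_num
      congr 1
      ring
    have h2 : (n : ℝ) ^ (1 - 2 * κ) = (n : ℝ) * (n : ℝ) ^ (-(2 * κ)) := by
      rw [show (1 - 2 * κ) = 1 + -(2 * κ) by ring, Real.rpow_add hN0, Real.rpow_one]
    rw [h1, h2]
    ring
  -- the bad events
  set G : Set Ω := {a | ∀ k ∈ Mstar, t < |W k a|} with hGdef
  set Bad : Fin p → Set Ω := fun k =>
    {a | t ≤ W k a - ∫ b, W k b ∂P} ∪ {a | t ≤ (∫ b, W k b ∂P) - W k a} with hBaddef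
  have hGsub : Gᶜ ⊆ ⋃ k ∈ Mstar, Bad k := by
    intro a ha
    simp only [hGdef, Set.mem_compl_iff, Set.mem_setOf_eq, not_forall] at ha
    obtain ⟨k, hk, hle⟩ := ha
    rw [not_lt] at hle
    have h2t : 2 * t < |∫ b, W k b ∂P| := by
      have := hM k hk
      have h3 : 2 * t ≤ c₂ * (n : ℝ) ^ (-κ) := by
        rw [htdef]
        nlinarith [hrp.le]
      linarith
    have habs : t < |W k a - ∫ b, W k b ∂P| := by
      have := abs_sub_abs_le_abs_sub (∫ b, W k b ∂P) (W k a)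
      have h4 : |(∫ b, W k b ∂P) - W k a| = |W k a - ∫ b, W k b ∂P| := abs_sub_comm _ _
      linarith
    refine Set.mem_biUnion hk ?_
    rw [hBaddef]
    rcases le_abs.mp habs.le with hc | hc
    · exact Or.inl hc
    · right
      show t ≤ (∫ b, W k b ∂P) - W k a
      linarith
  have hGmeas : MeasurableSet G := by
    have : G = ⋂ k ∈ Mstar, {a | t < |W k a|} := by
      ext a; simp [hGdef]
    rw [this]
    exact MeasurableSet.biInter (Mstar : Set (Fin p)).to_countable
      (fun k _ => measurableSet_lt measurable_const (hWmeas k).abs)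
  -- probability arithmetic
  have hsum_ne_top : ∀ k ∈ Mstar, P (Bad k) ≠ ⊤ := fun k _ => measure_ne_top P _
  have hbadP : (P Gᶜ).toReal ≤ (Mstar.card : ℝ) *
      (2 * Real.exp (-(c₅ ^ 2 / 12) * (n : ℝ) ^ (1 - 2 * κ))) := by
    have h1 : P Gᶜ ≤ ∑ k ∈ Mstar, P (Bad k) :=
      (measure_mono hGsub).trans (measure_biUnion_finset_le Mstar Bad)
    have h2 : (P Gᶜ).toReal ≤ ∑ k ∈ Mstar, (P (Bad k)).toReal := by
      calc (P Gᶜ).toReal ≤ (∑ k ∈ Mstar, P (Bad k)).toReal := by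
            apply ENNReal.toReal_mono _ h1
            exact (ENNReal.sum_lt_top.mpr (fun k hk =>
              (hsum_ne_top k hk).lt_top)).ne
        _ = ∑ k ∈ Mstar, (P (Bad k)).toReal := ENNReal.toReal_sum hsum_ne_top
    refine h2.trans ?_
    have h3 : ∀ k ∈ Mstar, (P (Bad k)).toReal ≤
        2 * Real.exp (-(c₅ ^ 2 / 12) * (n : ℝ) ^ (1 - 2 * κ)) := by
      intro k _
      have h4 : P (Bad k) ≤ P {a | t ≤ W k a - ∫ b, W k b ∂P}
          + P {a | t ≤ (∫ b, W k b ∂P) - W k a} := measure_union_le _ _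
      have h5 : (P (Bad k)).toReal ≤ (P {a | t ≤ W k a - ∫ b, W k b ∂P}).toReal
          + (P {a | t ≤ (∫ b, W k b ∂P) - W k a}).toReal := by
        calc (P (Bad k)).toReal
            ≤ (P {a | t ≤ W k a - ∫ b, W k b ∂P}
                + P {a | t ≤ (∫ b, W k b ∂P) - W k a}).toReal := by
              apply ENNReal.toReal_mono _ h4
              exact (ENNReal.add_lt_top.mpr
                ⟨(measure_ne_top P _).lt_top, (measure_ne_top P _).lt_top⟩).ne
          _ = _ := ENNReal.toReal_add (measure_ne_top P _) (measure_ne_top P _)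
      obtain ⟨k1, k2⟩ := key k
      rw [hexp] at k1 k2
      linarith
    calc ∑ k ∈ Mstar, (P (Bad k)).toReal
        ≤ ∑ _k ∈ Mstar, 2 * Real.exp (-(c₅ ^ 2 / 12) * (n : ℝ) ^ (1 - 2 * κ)) :=
          Finset.sum_le_sum h3
      _ = (Mstar.card : ℝ) * (2 * Real.exp (-(c₅ ^ 2 / 12) * (n : ℝ) ^ (1 - 2 * κ))) := by
          rw [Finset.sum_const, nsmul_eq_mul]
  have hcompl : (P G).toReal + (P Gᶜ).toReal = 1 := by
    have := prob_add_prob_compl (μ := P) hGmeas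
    have h6 := congrArg ENNReal.toReal this
    rw [ENNReal.toReal_add (measure_ne_top P _) (measure_ne_top P _)] at h6
    simpa using h6
  have : 1 - 2 * (Mstar.card : ℝ) * Real.exp (-(c₅ ^ 2 / 12) * (n : ℝ) ^ (1 - 2 * κ))
      ≤ (P G).toReal := by
    have := hbadP
    linarith
  exact this
end
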